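/- arXiv:1310.2194 — 4 statements merged into one kernel-verified Lean document; each statement's English description precedes it below -/
import Mathlib

section
/- Consider AE jigsaw percolation on a connected puzzle graph G_puz with N vertices and maximum degree at most D, and Erdős–Rényi people graph with edge probability p = μ/(D log N) where 0 < μ < 2D/α. Suppose A ⊆ V is a set of vertices with |A| = α log N such that the induced subgraph G_puz^A is connected. Then P_p(Solve_A) ≤ (2D/(αμ)) · N^{α(1 − αμ/(2D) − log(2D/(αμ)))}. -/
open scoped Classical
open Filter

noncomputable section

namespace JigsawPerc

variable {V : Type*}

/-- Number of `G`-neighbors of `v` inside `S` (not including `v`). -/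
def nbrCount (G : SimpleGraph V) (v : V) (S : Set V) : ℕ :=
  {u ∈ S | G.Adj v u}.ncard

/-- One-directional merging condition, (J1)–(J3), from part `Wi` toward part `Wj`. -/
def LinkedDir (Gpuz Gppl : SimpleGraph V) (σ τ : ℕ) (θ : ℕ∞) (Wi Wj : Set V) : Prop :=
  (∃ v₁ ∈ Wi, ∃ v₂ ∈ Wj, Gppl.Adj v₁ v₂ ∧ Gpuz.Adj v₁ v₂) ∨
  (∃ v₁ ∈ Wi, θ ≤ (nbrCount Gpuz v₁ Wj : ℕ∞)) ∨
  (∃ v₁ ∈ Wi, σ ≤ nbrCount Gppl v₁ Wj ∧ τ ≤ nbrCount Gpuz v₁ Wj)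

/-- Two distinct parts are linked when (J1), (J2) or (J3) holds in one of the two directions. -/
def Linked (Gpuz Gppl : SimpleGraph V) (σ τ : ℕ) (θ : ℕ∞) (Wi Wj : Set V) : Prop :=
  Wi ≠ Wj ∧ (LinkedDir Gpuz Gppl σ τ θ Wi Wj ∨ LinkedDir Gpuz Gppl σ τ θ Wj Wi)

/-- One step of the jigsaw dynamics: merge all parts lying in the same connected
component of the `Linked` graph on parts. -/
def step (Gpuz Gppl : SimpleGraph V) (σ τ : ℕ) (θ : ℕ∞) (P : Set (Set V)) : Set (Set V) :=
  { U | ∃ W ∈ P, U = ⋃₀ {W' | W' ∈ P ∧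
      Relation.EqvGen (fun A B => A ∈ P ∧ B ∈ P ∧ Linked Gpuz Gppl σ τ θ A B) W W'} }

/-- The partition at time `t`, started from the partition into singletons. -/
def partAt (Gpuz Gppl : SimpleGraph V) (σ τ : ℕ) (θ : ℕ∞) (t : ℕ) : Set (Set V) :=
  (step Gpuz Gppl σ τ θ)^[t] {S : Set V | ∃ v, S = {v}}

/-- The event that the puzzle is solved: at some time all vertices form one single part. -/
def Solve (Gpuz Gppl : SimpleGraph V) (σ τ : ℕ) (θ : ℕ∞) : Prop :=
  ∃ t, partAt Gpuz Gppl σ τ θ t = {Set.univ}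

/-- `A` is internally solved: jigsaw percolation on the induced subgraphs solves `A`. -/
def SolveIn (Gpuz Gppl : SimpleGraph V) (σ τ : ℕ) (θ : ℕ∞) (A : Set V) : Prop :=
  Solve (Gpuz.induce A) (Gppl.induce A) σ τ θ

/-- The people graph determined by a configuration of the off-diagonal edge indicators. -/
def graphOf (ω : {e : Sym2 V // ¬ e.IsDiag} → Bool) : SimpleGraph V :=
  SimpleGraph.fromEdgeSet {e | ∃ h : ¬ e.IsDiag, ω ⟨e, h⟩ = true}

/-- Probability, under the Erdős–Rényi measure with edge probability `p` on the vertex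
set `V`, of the people-graph event `A`. -/
def erProb [Fintype V] (p : ℝ) (A : SimpleGraph V → Prop) : ℝ :=
  ∑ ω : {e : Sym2 V // ¬ e.IsDiag} → Bool,
    if A (graphOf ω) then ∏ e, (if ω e then p else 1 - p) else 0

/-- Probability that jigsaw percolation with puzzle graph `Gpuz`, Erdős–Rényi people graph
with edge probability `p`, and thresholds `σ, τ, θ` solves the puzzle. -/
def solveProb [Fintype V] (Gpuz : SimpleGraph V) (σ τ : ℕ) (θ : ℕ∞) (p : ℝ) : ℝ :=
  erProb p fun Gppl => Solve Gpuz Gppl σ τ θ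

/-- The `d`-dimensional discrete torus on `ℤ_n^d`: nearest-neighbor adjacency with
periodic boundary conditions. -/
def torus (d n : ℕ) : SimpleGraph (Fin d → Fin n) :=
  SimpleGraph.fromRel fun x y =>
    ∃ i, (∀ j, j ≠ i → x j = y j) ∧ ((x i : ℕ) + 1) % n = (y i : ℕ)

/-- The ring (cycle) graph on `ℤ_n`. -/
def ring (n : ℕ) : SimpleGraph (Fin n) :=
  SimpleGraph.fromRel fun x y => ((x : ℕ) + 1) % n = (y : ℕ)

/-- `P(Poisson(x) ≥ σ) = e^{-x} ∑_{i=σ}^∞ x^i/i!`. -/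
def poissonTail (σ : ℕ) (x : ℝ) : ℝ :=
  Real.exp (-x) * ∑' i : ℕ, x ^ (σ + i) / (σ + i).factorial

/-- `g_σ(x) = -log P(Poisson(x) ≥ σ)`. -/
def gPois (σ : ℕ) (x : ℝ) : ℝ := -Real.log (poissonTail σ x)

/-- `λ_σ = ∫_0^∞ g_σ(x) dx`. -/
def lambdaC (σ : ℕ) : ℝ := ∫ x in Set.Ioi (0 : ℝ), gPois σ x

/-- `ν_σ = ∫_0^∞ -log(1 - exp(-x^{2σ+1}/σ!)) dx`. -/
def nuC (σ : ℕ) : ℝ :=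
  ∫ x in Set.Ioi (0 : ℝ), -Real.log (1 - Real.exp (-(x ^ (2 * σ + 1) / (σ.factorial : ℝ))))


section AuxJigsaw

variable {W : Type*}

/-! ### Deterministic part: solving forces people-graph connectivity -/

lemma partAt_succ (Gp Gl : SimpleGraph W) (σ τ : ℕ) (θ : ℕ∞) (t : ℕ) :
    partAt Gp Gl σ τ θ (t + 1) = step Gp Gl σ τ θ (partAt Gp Gl σ τ θ t) := by
  rw [partAt, partAt, Function.iterate_succ_apply']

lemma not_solve_isEmpty [IsEmpty W] (Gp Gl : SimpleGraph W) (σ τ : ℕ) (θ : ℕ∞) :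
    ¬ Solve Gp Gl σ τ θ := by
  have h0 : ∀ t, partAt Gp Gl σ τ θ t = ∅ := by
    intro t
    induction t with
    | zero =>
      ext S
      simp only [partAt, Function.iterate_zero_apply, Set.mem_setOf_eq,
        Set.mem_empty_iff_false, iff_false, not_exists]
      exact fun v => (IsEmpty.false v).elim
    | succ t ih =>
      rw [partAt_succ, ih]
      ext S
      simp [step]
  rintro ⟨t, ht⟩
  rw [h0 t] at ht
  exact Set.singleton_ne_empty _ ht.symm

lemma solve_of_subsingleton [Nonempty W] [Subsingleton W] (Gp Gl : SimpleGraph W)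
    (σ τ : ℕ) (θ : ℕ∞) : Solve Gp Gl σ τ θ := by
  refine ⟨0, ?_⟩
  have huniv : (Set.univ : Set W) = {Classical.arbitrary W} := by
    ext x
    simp [Subsingleton.elim x (Classical.arbitrary W)]
  have : partAt Gp Gl σ τ θ 0 = {S : Set W | ∃ v, S = {v}} := by
    rw [partAt, Function.iterate_zero_apply]
  rw [this]
  ext S
  simp only [Set.mem_setOf_eq, Set.mem_singleton_iff]
  constructor
  · rintro ⟨v, rfl⟩
    rw [huniv, Subsingleton.elim v (Classical.arbitrary W)]
  · rintro rfl
    exact ⟨Classical.arbitrary W, huniv⟩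

lemma linkedDir_edge {Gp Gl : SimpleGraph W} {X Y : Set W}
    (h : LinkedDir Gp Gl 1 1 ⊤ X Y) : ∃ x ∈ X, ∃ y ∈ Y, Gl.Adj x y := by
  rcases h with ⟨v₁, h1, v₂, h2, hl, _⟩ | ⟨v₁, _, hθ⟩ | ⟨v₁, h1, hσ, _⟩
  · exact ⟨v₁, h1, v₂, h2, hl⟩
  · exact absurd (top_le_iff.mp hθ) (by simp)
  · obtain ⟨u, hu, hadj⟩ := Set.nonempty_of_ncard_ne_zero
      (Nat.one_le_iff_ne_zero.mp hσ)
    exact ⟨v₁, h1, u, hu, hadj⟩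

lemma linked_edge {Gp Gl : SimpleGraph W} {X Y : Set W}
    (h : Linked Gp Gl 1 1 ⊤ X Y) : ∃ x ∈ X, ∃ y ∈ Y, Gl.Adj x y := by
  rcases h.2 with h' | h'
  · exact linkedDir_edge h'
  · obtain ⟨y, hy, x, hx, hadj⟩ := linkedDir_edge h'
    exact ⟨x, hx, y, hy, hadj.symm⟩

lemma eqvGen_mem {P : Set (Set W)} {r : Set W → Set W → Prop}
    (hr : ∀ X Y, r X Y → X ∈ P ∧ Y ∈ P) {X Y : Set W} (h : Relation.EqvGen r X Y) :
    X = Y ∨ (X ∈ P ∧ Y ∈ P) := by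
  induction h with
  | rel a b hab => exact Or.inr (hr _ _ hab)
  | refl a => exact Or.inl rfl
  | symm a b _ ih =>
    rcases ih with h | h
    · exact Or.inl h.symm
    · exact Or.inr ⟨h.2, h.1⟩
  | trans a b c _ _ ih1 ih2 =>
    rcases ih1 with h1 | h1 <;> rcases ih2 with h2 | h2
    · exact Or.inl (h1.trans h2)
    · exact Or.inr ⟨by rw [h1]; exact h2.1, h2.2⟩
    · exact Or.inr ⟨h1.1, by rw [← h2]; exact h1.2⟩
    · exact Or.inr ⟨h1.1, h2.2⟩

/-- Connectivity of `Gl` within a set `S`. -/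
def SConn (Gl : SimpleGraph W) (S : Set W) : Prop :=
  ∀ u ∈ S, ∀ v ∈ S, Relation.ReflTransGen (fun a b => a ∈ S ∧ b ∈ S ∧ Gl.Adj a b) u v

lemma sconn_invariant (Gp Gl : SimpleGraph W) (t : ℕ) :
    ∀ U ∈ partAt Gp Gl 1 1 ⊤ t, U.Nonempty ∧ SConn Gl U := by
  induction t with
  | zero =>
    rintro U ⟨v, rfl⟩
    refine ⟨⟨v, rfl⟩, ?_⟩
    intro u hu w hw
    rw [Set.mem_singleton_iff] at hu hw
    rw [hu, hw]
  | succ t ih =>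
    rw [partAt_succ]
    rintro U ⟨Wr, hWr, rfl⟩
    set P := partAt Gp Gl 1 1 ⊤ t with hP
    set r := fun A B : Set W => A ∈ P ∧ B ∈ P ∧ Linked Gp Gl 1 1 ⊤ A B with hrdef
    set U := ⋃₀ {W' | W' ∈ P ∧ Relation.EqvGen r Wr W'} with hUdef
    have hsub : ∀ X, X ∈ P → Relation.EqvGen r Wr X → X ⊆ U := by
      intro X h1 h2
      exact Set.subset_sUnion_of_mem ⟨h1, h2⟩
    have reach_in : ∀ X, X ∈ P → Relation.EqvGen r Wr X → ∀ u ∈ X, ∀ v ∈ X,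
        Relation.ReflTransGen (fun a b => a ∈ U ∧ b ∈ U ∧ Gl.Adj a b) u v := by
      intro X h1 h2 u hu v hv
      exact Relation.ReflTransGen.mono
        (fun a b hab => ⟨hsub X h1 h2 hab.1, hsub X h1 h2 hab.2.1, hab.2.2⟩) _ _ ((ih X h1).2 u hu v hv)
    have claim : ∀ X Y : Set W, Relation.EqvGen r X Y → X ∈ P → Y ∈ P →
        Relation.EqvGen r Wr X → Relation.EqvGen r Wr Y → ∀ u ∈ X, ∀ v ∈ Y,
        Relation.ReflTransGen (fun a b => a ∈ U ∧ b ∈ U ∧ Gl.Adj a b) u v := by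
      intro X Y h
      induction h with
      | rel a b hab =>
        intro ha hb hWa hWb u hu v hv
        obtain ⟨x, hx, y, hy, hadj⟩ := linked_edge hab.2.2
        refine (reach_in a ha hWa u hu x hx).trans ?_
        refine (Relation.ReflTransGen.single
          ⟨hsub a ha hWa hx, hsub b hb hWb hy, hadj⟩).trans ?_
        exact reach_in b hb hWb y hy v hv
      | refl a =>
        intro ha _ hWa _ u hu v hv
        exact reach_in a ha hWa u hu v hv
      | symm a b _ ihs =>
        intro hb ha hWb hWa u hu v hv
        have hsymm : Symmetric (fun a b : W => a ∈ U ∧ b ∈ U ∧ Gl.Adj a b) :=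
          fun x y hxy => ⟨hxy.2.1, hxy.1, hxy.2.2.symm⟩
        letI : Std.Symm (fun a b : W => a ∈ U ∧ b ∈ U ∧ Gl.Adj a b) := ⟨fun x y hxy => hsymm hxy⟩
        exact Std.Symm.symm (r := Relation.ReflTransGen (fun a b : W => a ∈ U ∧ b ∈ U ∧ Gl.Adj a b)) _ _ (ihs ha hb hWa hWb v hv u hu)
      | trans a b c hab hbc ih1 ih2 =>
        intro ha hc hWa hWc u hu v hv
        rcases eqvGen_mem (fun X Y h => ⟨h.1, h.2.1⟩) hab with heq | ⟨-, hb⟩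
        · subst heq
          exact ih2 ha hc hWa hWc u hu v hv
        · have hWb : Relation.EqvGen r Wr b := hWa.trans _ _ _ hab
          obtain ⟨w, hw⟩ := (ih b hb).1
          exact (ih1 ha hb hWa hWb u hu w hw).trans (ih2 hb hc hWb hWc w hw v hv)
    obtain ⟨w0, hw0⟩ := (ih Wr hWr).1
    refine ⟨⟨w0, hsub Wr hWr (Relation.EqvGen.refl Wr) hw0⟩, ?_⟩
    intro u hu v hv
    obtain ⟨X, ⟨hX, hWX⟩, hu'⟩ := hu
    obtain ⟨Y, ⟨hY, hWY⟩, hv'⟩ := hv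
    exact claim X Y ((hWX.symm _ _).trans _ _ _ hWY) hX hY hWX hWY u hu' v hv'

lemma solve_connected [Nonempty W] {Gp Gl : SimpleGraph W}
    (h : Solve Gp Gl 1 1 ⊤) : Gl.Connected := by
  obtain ⟨t, ht⟩ := h
  have hinv := sconn_invariant Gp Gl t Set.univ (by rw [ht]; rfl)
  rw [SimpleGraph.connected_iff]
  refine ⟨fun u v => ?_, ‹_›⟩
  rw [SimpleGraph.reachable_iff_reflTransGen]
  exact Relation.ReflTransGen.mono (fun a b hab => hab.2.2) _ _ (hinv.2 u trivial v trivial)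

/-! ### A connected graph on `n` vertices has at least `n - 1` edges -/

lemma connected_card_le_edges {W : Type*} [Fintype W] {G : SimpleGraph W}
    (h : G.Connected) : Fintype.card W - 1 ≤ G.edgeFinset.card := by
  classical
  obtain ⟨r⟩ := h.nonempty
  have key : ∀ v : W, v ≠ r → ∃ u, G.Adj u v ∧ G.dist r u < G.dist r v := by
    intro v hv
    obtain ⟨w, hw⟩ := (h v r).exists_walk_length_eq_dist
    cases w with
    | nil => exact absurd rfl hv
    | @cons _ x _ hadj q =>
      refine ⟨x, hadj.symm, ?_⟩
      have h1 : G.dist x r ≤ q.length := SimpleGraph.dist_le q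
      have h2 : q.length + 1 = G.dist v r := by
        simpa [SimpleGraph.Walk.length_cons] using hw
      have h3 : G.dist r x = G.dist x r := SimpleGraph.dist_comm
      have h4 : G.dist r v = G.dist v r := SimpleGraph.dist_comm
      omega
  set f : W → Sym2 W := fun v =>
    if hv : v = r then s(r, r) else s((key v hv).choose, v) with hf
  have hmem : ∀ v ∈ Finset.univ.erase r, f v ∈ G.edgeFinset := by
    intro v hv
    have hvr : v ≠ r := (Finset.mem_erase.mp hv).1
    have := (key v hvr).choose_spec
    simp only [hf, dif_neg hvr, SimpleGraph.mem_edgeFinset, SimpleGraph.mem_edgeSet]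
    exact this.1
  have hinj : Set.InjOn f (Finset.univ.erase r) := by
    intro v₁ hv₁ v₂ hv₂ hfv
    have h1 : v₁ ≠ r := (Finset.mem_erase.mp (Finset.mem_coe.mp hv₁)).1
    have h2 : v₂ ≠ r := (Finset.mem_erase.mp (Finset.mem_coe.mp hv₂)).1
    have s1 := (key v₁ h1).choose_spec
    have s2 := (key v₂ h2).choose_spec
    simp only [hf, dif_neg h1, dif_neg h2, Sym2.eq_iff] at hfv
    rcases hfv with ⟨-, h⟩ | ⟨hA, hB⟩
    · exact h
    · exfalso
      rw [hA] at s1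
      rw [← hB] at s2
      omega
  have hcard : (Finset.univ.erase r).card = Fintype.card W - 1 := by
    rw [Finset.card_erase_of_mem (Finset.mem_univ r), Finset.card_univ]
  calc Fintype.card W - 1 = (Finset.univ.erase r).card := hcard.symm
    _ ≤ G.edgeFinset.card := Finset.card_le_card_of_injOn f hmem hinj

/-! ### Counting lemmas for edges inside `A` -/

lemma det_edge_bound {V : Type*} [Fintype V] (Gpuz : SimpleGraph V) (A : Set V)
    (hA : A.Nonempty) (ω : {e : Sym2 V // ¬ e.IsDiag} → Bool)
    (h : SolveIn Gpuz (graphOf ω) 1 1 ⊤ A) :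
    A.ncard - 1 ≤ (Finset.univ.filter
      fun e : {e : Sym2 V // ¬ e.IsDiag} =>
        ω e = true ∧ ∀ x ∈ (e : Sym2 V), x ∈ A).card := by
  classical
  haveI : Nonempty ↥A := hA.to_subtype
  have hncard : A.ncard = Fintype.card ↥A := by
    rw [Set.ncard_eq_toFinset_card', Set.toFinset_card]
  have hc : ((graphOf ω).induce A).Connected := solve_connected h
  have h1 : Fintype.card ↥A - 1 ≤ ((graphOf ω).induce A).edgeFinset.card :=
    connected_card_le_edges hc
  rcases ((graphOf ω).induce A).edgeFinset.eq_empty_or_nonempty with hemp | ⟨ε₀, hε₀⟩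
  · rcases Nat.lt_or_ge (Fintype.card ↥A) 2 with hlt | hge
    · omega
    · exfalso
      rw [hemp] at h1
      simp only [Finset.card_empty] at h1
      omega
  · -- the nonempty case; we build the injection
    have hne : Nonempty {e : Sym2 V // ¬ e.IsDiag} := by
      refine ⟨⟨Sym2.map Subtype.val ε₀, ?_⟩⟩
      rw [Sym2.isDiag_map Subtype.val_injective]
      exact ((graphOf ω).induce A).not_isDiag_of_mem_edgeSet
        (SimpleGraph.mem_edgeFinset.mp hε₀)
    set f : Sym2 ↥A → {e : Sym2 V // ¬ e.IsDiag} := fun ε =>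
      if hd : ¬ (Sym2.map (Subtype.val) ε).IsDiag then ⟨Sym2.map Subtype.val ε, hd⟩
      else Classical.arbitrary _ with hfdef
    have h2 : ((graphOf ω).induce A).edgeFinset.card ≤ (Finset.univ.filter
        fun e : {e : Sym2 V // ¬ e.IsDiag} =>
          ω e = true ∧ ∀ x ∈ (e : Sym2 V), x ∈ A).card := by
      apply Finset.card_le_card_of_injOn f
      · intro ε hε
        have hεe : ε ∈ ((graphOf ω).induce A).edgeSet := SimpleGraph.mem_edgeFinset.mp hε
        have hd : ¬ (Sym2.map (Subtype.val) ε).IsDiag := by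
          rw [Sym2.isDiag_map Subtype.val_injective]
          exact ((graphOf ω).induce A).not_isDiag_of_mem_edgeSet hεe
        simp only [hfdef, dif_pos hd, Finset.mem_filter, Finset.mem_univ, true_and]
        induction ε with
        | _ x y =>
          have hadj : ((graphOf ω).induce A).Adj x y := hεe
          have hadj' : (graphOf ω).Adj ↑x ↑y := by
            simpa using hadj
          rw [graphOf, SimpleGraph.fromEdgeSet_adj] at hadj'
          obtain ⟨⟨hd', hω⟩, -⟩ := hadj'
          simp only [Finset.mem_coe, Finset.mem_filter, Finset.mem_univ, true_and]
          constructor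
          · convert hω using 2
            simp [Sym2.map_pair_eq]
          · intro z hz
            rw [Sym2.map_pair_eq, Sym2.mem_iff] at hz
            rcases hz with rfl | rfl
            · exact x.2
            · exact y.2
      · intro ε₁ hε₁ ε₂ hε₂ hfe
        have hd₁ : ¬ (Sym2.map (Subtype.val) ε₁).IsDiag := by
          rw [Sym2.isDiag_map Subtype.val_injective]
          exact ((graphOf ω).induce A).not_isDiag_of_mem_edgeSet
            (SimpleGraph.mem_edgeFinset.mp (by simpa using hε₁))
        have hd₂ : ¬ (Sym2.map (Subtype.val) ε₂).IsDiag := by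
          rw [Sym2.isDiag_map Subtype.val_injective]
          exact ((graphOf ω).induce A).not_isDiag_of_mem_edgeSet
            (SimpleGraph.mem_edgeFinset.mp (by simpa using hε₂))
        simp only [hfdef, dif_pos hd₁, dif_pos hd₂, Subtype.mk.injEq] at hfe
        exact Sym2.map.injective Subtype.val_injective hfe
    omega

lemma filter_card_le_choose {V : Type*} [Fintype V] (A : Set V) :
    (Finset.univ.filter
      fun e : {e : Sym2 V // ¬ e.IsDiag} => ∀ x ∈ (e : Sym2 V), x ∈ A).card ≤
      (A.ncard) * (A.ncard - 1) / 2 := by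
  classical
  have hncard : A.ncard = Fintype.card ↥A := by
    rw [Set.ncard_eq_toFinset_card', Set.toFinset_card]
  have hsurj : Set.SurjOn
      (fun ε : {e : Sym2 ↥A // ¬ e.IsDiag} =>
        (⟨Sym2.map Subtype.val ε.1, by
          rw [Sym2.isDiag_map Subtype.val_injective]; exact ε.2⟩ :
          {e : Sym2 V // ¬ e.IsDiag}))
      (Finset.univ : Finset {e : Sym2 ↥A // ¬ e.IsDiag})
      (Finset.univ.filter
        fun e : {e : Sym2 V // ¬ e.IsDiag} => ∀ x ∈ (e : Sym2 V), x ∈ A) := by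
    intro e he
    simp only [Finset.coe_filter, Set.mem_setOf_eq] at he
    obtain ⟨-, hmem⟩ := he
    obtain ⟨e, hd⟩ := e
    induction e with
    | _ x y =>
      have hx : x ∈ A := hmem x (by simp)
      have hy : y ∈ A := hmem y (by simp)
      have hxy : x ≠ y := by
        intro hcon
        exact hd (by simp [hcon, Sym2.mk_isDiag_iff])
      refine ⟨⟨s(⟨x, hx⟩, ⟨y, hy⟩), ?_⟩, by simp, ?_⟩
      · rw [Sym2.mk_isDiag_iff]
        exact fun hcon => hxy (congrArg Subtype.val hcon)
      · simp [Sym2.map_pair_eq]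
  have h1 := Finset.card_le_card_of_surjOn _ hsurj
  have h2 : (Finset.univ : Finset {e : Sym2 ↥A // ¬ e.IsDiag}).card =
      (Fintype.card ↥A).choose 2 := by
    rw [Finset.card_univ, Sym2.card_subtype_not_diag]
  rw [h2] at h1
  calc _ ≤ (Fintype.card ↥A).choose 2 := h1
    _ = A.ncard * (A.ncard - 1) / 2 := by rw [Nat.choose_two_right, hncard]

/-! ### Probabilistic part -/

lemma sum_prod_bool {V : Type*} [Fintype V] (f : {e : Sym2 V // ¬ e.IsDiag} → Bool → ℝ) :
    ∑ ω : {e : Sym2 V // ¬ e.IsDiag} → Bool, ∏ e, f e (ω e) =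
      ∏ e, (f e true + f e false) := by
  have h1 : ∏ e : {e : Sym2 V // ¬ e.IsDiag}, (∑ b : Bool, f e b) =
      ∑ ω ∈ Fintype.piFinset (fun _ : {e : Sym2 V // ¬ e.IsDiag} => (Finset.univ : Finset Bool)),
        ∏ e, f e (ω e) := Finset.prod_univ_sum _ _
  rw [Fintype.piFinset_univ] at h1
  rw [← h1]
  congr 1
  ext e
  simp [Fintype.sum_bool]

lemma erProb_all {V : Type*} [Fintype V] (p : ℝ) (Q : SimpleGraph V → Prop)
    (h : ∀ G, Q G) : erProb p Q = 1 := by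
  unfold erProb
  have : ∀ ω : {e : Sym2 V // ¬ e.IsDiag} → Bool,
      (if Q (graphOf ω) then ∏ e, (if ω e then p else 1 - p) else 0) =
        ∏ e, (fun e (b : Bool) => if b then p else 1 - p) e (ω e) := by
    intro ω
    rw [if_pos (h _)]
  rw [Finset.sum_congr rfl fun ω _ => this ω,
    sum_prod_bool (fun (e : {e : Sym2 V // ¬ e.IsDiag}) (b : Bool) => if b then p else 1 - p)]
  simp

lemma chernoff_bound {V : Type*} [Fintype V] (p c : ℝ) (hp0 : 0 ≤ p) (hp1 : p ≤ 1)
    (hc : 1 ≤ c) (S : Finset {e : Sym2 V // ¬ e.IsDiag}) (k : ℕ)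
    (Q : SimpleGraph V → Prop)
    (hdet : ∀ ω, Q (graphOf ω) →
      k ≤ (Finset.univ.filter fun e => ω e = true ∧ e ∈ S).card) :
    erProb p Q ≤ c⁻¹ ^ k * (1 - p + p * c) ^ S.card := by
  have hc0 : 0 < c := lt_of_lt_of_le one_pos hc
  set f : {e : Sym2 V // ¬ e.IsDiag} → Bool → ℝ := fun e b =>
    (if b then p else 1 - p) * (if (b = true ∧ e ∈ S) then c else 1) with hfdef
  have hfnonneg : ∀ e b, 0 ≤ f e b := by
    intro e b
    apply mul_nonneg
    · cases b <;> simp [hp1, hp0, sub_nonneg]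
    · split_ifs <;> [exact le_of_lt hc0; exact zero_le_one]
  have hpoint : ∀ ω : {e : Sym2 V // ¬ e.IsDiag} → Bool,
      (if Q (graphOf ω) then ∏ e, (if ω e then p else 1 - p) else 0) ≤
        c⁻¹ ^ k * ∏ e, f e (ω e) := by
    intro ω
    have hprodsplit : ∏ e, f e (ω e) =
        (∏ e, (if ω e then p else 1 - p)) *
          ∏ e, (if (ω e = true ∧ e ∈ S) then c else 1) := by
      rw [← Finset.prod_mul_distrib]
    have hgpow : ∏ e, (if (ω e = true ∧ e ∈ S) then c else 1) =
        c ^ (Finset.univ.filter fun e => ω e = true ∧ e ∈ S).card := by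
      rw [← Finset.prod_filter, Finset.prod_const]
    by_cases hQ : Q (graphOf ω)
    · rw [if_pos hQ, hprodsplit, hgpow]
      have hw : 0 ≤ ∏ e, (if ω e then p else 1 - p) := by
        apply Finset.prod_nonneg
        intro e _
        split_ifs
        · exact hp0
        · linarith
      have hX := hdet ω hQ
      have hfac : 1 ≤ c⁻¹ ^ k *
          c ^ (Finset.univ.filter fun e => ω e = true ∧ e ∈ S).card := by
        rw [inv_pow, inv_mul_eq_div, le_div_iff₀ (pow_pos hc0 k), one_mul]
        exact pow_le_pow_right₀ hc hX
      calc (∏ e, (if ω e then p else 1 - p))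
          = 1 * ∏ e, (if ω e then p else 1 - p) := (one_mul _).symm
        _ ≤ (c⁻¹ ^ k *
              c ^ (Finset.univ.filter fun e => ω e = true ∧ e ∈ S).card) *
              ∏ e, (if ω e then p else 1 - p) :=
            mul_le_mul_of_nonneg_right hfac hw
        _ = c⁻¹ ^ k * ((∏ e, (if ω e then p else 1 - p)) *
              c ^ (Finset.univ.filter fun e => ω e = true ∧ e ∈ S).card) := by ring
    · rw [if_neg hQ]
      apply mul_nonneg
      · positivity
      · exact Finset.prod_nonneg fun e _ => hfnonneg e (ω e)
  calc erProb p Q ≤ ∑ ω : {e : Sym2 V // ¬ e.IsDiag} → Bool,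
        c⁻¹ ^ k * ∏ e, f e (ω e) := Finset.sum_le_sum fun ω _ => hpoint ω
    _ = c⁻¹ ^ k * ∑ ω : {e : Sym2 V // ¬ e.IsDiag} → Bool, ∏ e, f e (ω e) := by
        rw [← Finset.mul_sum]
    _ = c⁻¹ ^ k * ∏ e : {e : Sym2 V // ¬ e.IsDiag}, (f e true + f e false) := by
        rw [sum_prod_bool f]
    _ = c⁻¹ ^ k * (1 - p + p * c) ^ S.card := by
        have : ∀ e : {e : Sym2 V // ¬ e.IsDiag}, f e true + f e false =
            if e ∈ S then (1 - p + p * c) else 1 := by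
          intro e
          simp only [hfdef, if_pos rfl]
          by_cases he : e ∈ S <;> simp [he] <;> ring
        rw [Finset.prod_congr rfl fun e _ => this e, ← Finset.prod_filter,
          Finset.prod_const, Finset.filter_univ_mem]

end AuxJigsaw


lemma stmt15_aux {V : Type*} [Fintype V] (Gpuz : SimpleGraph V) (A : Set V)
    (p q : ℝ) (hp0 : 0 ≤ p) (hq0 : 0 < q) (hq1 : q < 1)
    (hap : (A.ncard : ℝ) * p = 2 * q) (h2 : 2 ≤ A.ncard) :
    erProb p (fun Gppl => SolveIn Gpuz Gppl 1 1 ⊤ A) ≤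
      Real.exp (((A.ncard : ℝ) - 1) * (1 - q) + ((A.ncard : ℝ) - 1) * Real.log q) := by
  have ha2 : (2:ℝ) ≤ (A.ncard : ℝ) := by exact_mod_cast h2
  have hp1 : p ≤ 1 := by nlinarith
  have hA1 : A.Nonempty := Set.nonempty_of_ncard_ne_zero (by omega)
  set S := Finset.univ.filter
    (fun e : {e : Sym2 V // ¬ e.IsDiag} => ∀ x ∈ (e : Sym2 V), x ∈ A) with hSdef
  have hqinv1 : 1 ≤ q⁻¹ := by
    have h1 : q * q⁻¹ = 1 := mul_inv_cancel₀ hq0.ne'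
    have h2' : 0 < q⁻¹ := inv_pos.mpr hq0
    nlinarith
  have hdet : ∀ ω, (fun Gppl => SolveIn Gpuz Gppl 1 1 ⊤ A) (graphOf ω) →
      A.ncard - 1 ≤ (Finset.univ.filter fun e => ω e = true ∧ e ∈ S).card := by
    intro ω hsolve
    have hfeq : (Finset.univ.filter fun e => ω e = true ∧ e ∈ S) =
        (Finset.univ.filter fun e : {e : Sym2 V // ¬ e.IsDiag} =>
          ω e = true ∧ ∀ x ∈ (e : Sym2 V), x ∈ A) := by
      apply Finset.filter_congr
      intro e _
      simp [hSdef]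
    rw [hfeq]
    exact det_edge_bound Gpuz A hA1 ω hsolve
  have hkey := chernoff_bound p q⁻¹ hp0 hp1 hqinv1 S (A.ncard - 1)
    (fun Gppl => SolveIn Gpuz Gppl 1 1 ⊤ A) hdet
  rw [inv_inv] at hkey
  have hcast : ((A.ncard - 1 : ℕ) : ℝ) = (A.ncard : ℝ) - 1 := by
    have : 1 ≤ A.ncard := by omega
    push_cast [this]
    ring
  have hqpow : q ^ (A.ncard - 1) =
      Real.exp (((A.ncard : ℝ) - 1) * Real.log q) := by
    rw [← hcast, Real.exp_nat_mul, Real.exp_log hq0]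
  have hbase0 : 0 ≤ 1 - p + p * q⁻¹ := by
    have := mul_nonneg hp0 (inv_pos.mpr hq0).le
    linarith
  have hbase : 1 - p + p * q⁻¹ ≤ Real.exp (p * (q⁻¹ - 1)) := by
    have h := Real.add_one_le_exp (p * (q⁻¹ - 1))
    nlinarith
  have hm : (S.card : ℝ) ≤ (A.ncard : ℝ) * ((A.ncard : ℝ) - 1) / 2 := by
    have h1 : S.card ≤ A.ncard * (A.ncard - 1) / 2 := filter_card_le_choose A
    calc (S.card : ℝ) ≤ ((A.ncard * (A.ncard - 1) / 2 : ℕ) : ℝ) := by exact_mod_cast h1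
      _ ≤ ((A.ncard * (A.ncard - 1) : ℕ) : ℝ) / 2 := Nat.cast_div_le
      _ = (A.ncard : ℝ) * ((A.ncard : ℝ) - 1) / 2 := by
          push_cast [Nat.cast_sub (by omega : 1 ≤ A.ncard)]
          ring
  have hfac0 : 0 ≤ p * (q⁻¹ - 1) := mul_nonneg hp0 (by linarith)
  have hq' : q * q⁻¹ = 1 := mul_inv_cancel₀ hq0.ne'
  have hexp : (S.card : ℝ) * (p * (q⁻¹ - 1)) ≤ ((A.ncard : ℝ) - 1) * (1 - q) := by
    calc (S.card : ℝ) * (p * (q⁻¹ - 1))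
        ≤ ((A.ncard : ℝ) * ((A.ncard : ℝ) - 1) / 2) * (p * (q⁻¹ - 1)) :=
          mul_le_mul_of_nonneg_right hm hfac0
      _ = ((A.ncard : ℝ) - 1) * (1 - q) := by
          linear_combination ((((A.ncard : ℝ) - 1) * (q⁻¹ - 1)) / 2) * hap +
            ((A.ncard : ℝ) - 1) * hq'
  have hpow : (1 - p + p * q⁻¹) ^ S.card ≤
      Real.exp (((A.ncard : ℝ) - 1) * (1 - q)) := by
    calc (1 - p + p * q⁻¹) ^ S.card
        ≤ (Real.exp (p * (q⁻¹ - 1))) ^ S.card := pow_le_pow_left₀ hbase0 hbase _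
      _ = Real.exp ((S.card : ℝ) * (p * (q⁻¹ - 1))) := (Real.exp_nat_mul _ _).symm
      _ ≤ Real.exp (((A.ncard : ℝ) - 1) * (1 - q)) := Real.exp_le_exp.mpr hexp
  calc erProb p (fun Gppl => SolveIn Gpuz Gppl 1 1 ⊤ A)
      ≤ q ^ (A.ncard - 1) * (1 - p + p * q⁻¹) ^ S.card := hkey
    _ ≤ q ^ (A.ncard - 1) * Real.exp (((A.ncard : ℝ) - 1) * (1 - q)) :=
        mul_le_mul_of_nonneg_left hpow (pow_nonneg hq0.le _)
    _ = Real.exp (((A.ncard : ℝ) - 1) * (1 - q) + ((A.ncard : ℝ) - 1) * Real.log q) := by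
        rw [hqpow, ← Real.exp_add]
        ring_nf

/-- Lemma 3.2: for AE jigsaw percolation on a connected puzzle graph
with `N` vertices and maximum degree at most `D`, with `p = μ/(D log N)` and
`0 < μ < 2D/α`, any `A` with `|A| = α log N` inducing a connected puzzle subgraph
satisfies `P_p(Solve_A) ≤ (2D/(αμ)) N^{α(1 - αμ/(2D) - log(2D/(αμ)))}`. -/
theorem stmt15 {V : Type*} [Fintype V] (Gpuz : SimpleGraph V) (hconn : Gpuz.Connected)
    (D : ℕ) (hD : 1 ≤ D) (hdeg : ∀ v : V, (Gpuz.neighborSet v).ncard ≤ D)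
    (α μ : ℝ) (hα : 0 < α) (hμ0 : 0 < μ) (hμ : μ < 2 * D / α)
    (A : Set V) (hA : (A.ncard : ℝ) = α * Real.log (Fintype.card V))
    (hAconn : (Gpuz.induce A).Connected) :
    erProb (μ / (D * Real.log (Fintype.card V)))
        (fun Gppl => SolveIn Gpuz Gppl 1 1 ⊤ A) ≤
      2 * D / (α * μ) *
        (Fintype.card V : ℝ) ^
          (α * (1 - α * μ / (2 * D) - Real.log (2 * D / (α * μ)))) := by
  rcases Nat.eq_zero_or_pos A.ncard with ha0 | ha1
  · -- `A` is empty: the event is impossible.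
    have hAe : A = ∅ := (Set.ncard_eq_zero A.toFinite).mp ha0
    have hsolve : ∀ ω : {e : Sym2 V // ¬ e.IsDiag} → Bool,
        ¬ SolveIn Gpuz (graphOf ω) 1 1 ⊤ A := by
      intro ω
      haveI : IsEmpty ↥A := Set.isEmpty_coe_sort.mpr hAe
      exact not_solve_isEmpty _ _ _ _ _
    have hzero : erProb (μ / (D * Real.log (Fintype.card V)))
        (fun Gppl => SolveIn Gpuz Gppl 1 1 ⊤ A) = 0 := by
      unfold erProb
      exact Finset.sum_eq_zero fun ω _ => if_neg (hsolve ω)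
    rw [hzero]
    positivity
  · have haR : (0:ℝ) < (A.ncard : ℝ) := by exact_mod_cast ha1
    have hD0 : (0:ℝ) < (D : ℝ) := by exact_mod_cast hD
    have hL : 0 < Real.log (Fintype.card V) := by
      by_contra h
      push_neg at h
      have h1 : α * Real.log (Fintype.card V) ≤ 0 :=
        mul_nonpos_of_nonneg_of_nonpos hα.le h
      rw [← hA] at h1
      linarith
    set q := α * μ / (2 * (D:ℝ)) with hqdef
    have hq0 : 0 < q := by rw [hqdef]; positivity
    have hμα : μ * α < 2 * (D:ℝ) := (lt_div_iff₀ hα).mp hμ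
    have hq1 : q < 1 := by
      rw [hqdef, div_lt_one (by positivity)]
      nlinarith
    have hp0 : 0 ≤ μ / ((D:ℝ) * Real.log (Fintype.card V)) := by positivity
    have hap : (A.ncard : ℝ) * (μ / ((D:ℝ) * Real.log (Fintype.card V))) = 2 * q := by
      rw [hA, hqdef]
      field_simp
    have h2D : 2 * (D:ℝ) / (α * μ) = q⁻¹ := by rw [hqdef, inv_div]
    have hN0 : (0:ℝ) < (Fintype.card V : ℝ) := by
      rcases Nat.eq_zero_or_pos (Fintype.card V) with h | h
      · rw [h] at hL
        norm_num at hL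
      · exact_mod_cast h
    have hqinv : q⁻¹ = Real.exp (-Real.log q) := by
      rw [Real.exp_neg, Real.exp_log hq0]
    have hRHS : 2 * (D:ℝ) / (α * μ) *
        (Fintype.card V : ℝ) ^ (α * (1 - q - Real.log (2 * (D:ℝ) / (α * μ)))) =
        Real.exp ((A.ncard : ℝ) * (1 - q) + ((A.ncard : ℝ) - 1) * Real.log q) := by
      rw [h2D, Real.log_inv, Real.rpow_def_of_pos hN0, hqinv, ← Real.exp_add]
      congr 1
      have hAL : α * Real.log (Fintype.card V) = (A.ncard : ℝ) := hA.symm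
      linear_combination (1 - q + Real.log q) * hAL
    rw [hRHS]
    rcases eq_or_lt_of_le (show 1 ≤ A.ncard from ha1) with ha1' | ha2
    · -- `|A| = 1`: the event always holds and the bound is at least `1`.
      obtain ⟨v, hAv⟩ := Set.ncard_eq_one.mp ha1'.symm
      have hsolve : ∀ G : SimpleGraph V, SolveIn Gpuz G 1 1 ⊤ A := by
        intro G
        haveI : Nonempty ↥A := by rw [hAv]; exact ⟨⟨v, rfl⟩⟩
        haveI : Subsingleton ↥A := by rw [hAv]; infer_instance
        exact solve_of_subsingleton _ _ _ _ _
      rw [erProb_all _ _ hsolve]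
      have ha1R : (A.ncard : ℝ) = 1 := by exact_mod_cast ha1'.symm
      rw [ha1R]
      simp only [sub_self, zero_mul, add_zero, one_mul]
      exact Real.one_le_exp (by linarith)
    · have hmain := stmt15_aux Gpuz A (μ / ((D:ℝ) * Real.log (Fintype.card V))) q
        hp0 hq0 hq1 hap (by omega)
      refine hmain.trans (Real.exp_le_exp.mpr ?_)
      have hlq : Real.log q ≤ 0 := Real.log_nonpos hq0.le hq1.le
      nlinarith

end JigsawPerc
end
end

section
/- For every integer σ ≥ 1, the function g_σ(x) = −log P(Poisson(x) ≥ σ) = −log(e^{−x} Σ_{i=σ}^∞ x^i/i!) is positive, decreasing, and convex on (0, ∞). -/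
open scoped Classical
open Filter

noncomputable section

namespace JigsawPerc

variable {V : Type*}

/-- Tail of the exponential series. -/
def Tf (σ : ℕ) (x : ℝ) : ℝ := ∑' i : ℕ, x ^ (σ + i) / (σ + i).factorial

/-- Partial sum of the exponential series. -/
def Sf (σ : ℕ) (x : ℝ) : ℝ := ∑ n ∈ Finset.range σ, x ^ n / n.factorial

lemma summable_aux (σ : ℕ) (x : ℝ) :
    Summable (fun i : ℕ => x ^ (σ + i) / ((σ + i).factorial : ℝ)) := by
  have h := (summable_nat_add_iff (f := fun n : ℕ => x ^ n / (n.factorial : ℝ)) σ).2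
    (Real.summable_pow_div_factorial x)
  simpa [add_comm] using h

lemma exp_eq_tsum (x : ℝ) : Real.exp x = ∑' n : ℕ, x ^ n / (n.factorial : ℝ) := by
  rw [Real.exp_eq_exp_ℝ, NormedSpace.exp_eq_tsum_div]

lemma Tf_eq (σ : ℕ) (x : ℝ) : Tf σ x = Real.exp x - Sf σ x := by
  have h := Real.summable_pow_div_factorial x
  have hs := Summable.sum_add_tsum_nat_add (f := fun n : ℕ => x ^ n / (n.factorial : ℝ)) σ h
  rw [Tf, Sf, exp_eq_tsum]
  have : (∑' i : ℕ, x ^ (σ + i) / ((σ + i).factorial : ℝ))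
      = ∑' i : ℕ, x ^ (i + σ) / ((i + σ).factorial : ℝ) := by
    simp [add_comm]
  rw [this]
  linarith [hs]

lemma hasDerivAt_Sf (σ : ℕ) (x : ℝ) :
    HasDerivAt (fun y => Sf (σ + 1) y) (Sf σ x) x := by
  induction σ with
  | zero =>
      have : (fun y : ℝ => Sf 1 y) = fun _ => (1 : ℝ) := by
        funext y; simp [Sf]
      rw [this]
      simpa [Sf] using hasDerivAt_const x (1 : ℝ)
  | succ m ih =>
      have h1 : (fun y : ℝ => Sf (m + 2) y)
          = fun y => Sf (m + 1) y + y ^ (m + 1) / ((m + 1).factorial : ℝ) := by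
        funext y; simp [Sf, Finset.sum_range_succ]
      rw [h1]
      have h2 : HasDerivAt (fun y : ℝ => y ^ (m + 1) / ((m + 1).factorial : ℝ))
          ((m + 1 : ℕ) * x ^ m / ((m + 1).factorial : ℝ)) x := by
        simpa using (hasDerivAt_pow (m + 1) x).div_const ((m + 1).factorial : ℝ)
      have h3 := ih.add h2
      refine h3.congr_deriv ?_
      symm
      have hfac : ((m + 1).factorial : ℝ) = (m + 1 : ℕ) * (m.factorial : ℝ) := by
        push_cast [Nat.factorial_succ]; ring
      rw [Sf, Finset.sum_range_succ, ← Sf, hfac]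
      have hm : (0 : ℝ) < (m + 1 : ℕ) := by positivity
      have hf : (0 : ℝ) < (m.factorial : ℝ) := by positivity
      field_simp

lemma hasDerivAt_Tf (m : ℕ) (x : ℝ) :
    HasDerivAt (fun y => Tf (m + 1) y) (x ^ m / (m.factorial : ℝ) + Tf (m + 1) x) x := by
  have h1 : (fun y : ℝ => Tf (m + 1) y) = fun y => Real.exp y - Sf (m + 1) y := by
    funext y; exact Tf_eq _ _
  rw [h1]
  have h := (Real.hasDerivAt_exp x).sub (hasDerivAt_Sf m x)
  refine h.congr_deriv ?_
  rw [Tf_eq]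
  have : Sf (m + 1) x = Sf m x + x ^ m / (m.factorial : ℝ) := by
    rw [Sf, Finset.sum_range_succ, ← Sf]
  rw [this]; ring

lemma Tf_pos (σ : ℕ) {x : ℝ} (hx : 0 < x) : 0 < Tf σ x := by
  refine Summable.tsum_pos (summable_aux σ x) (fun i => by positivity) 0 (by positivity)

lemma Sf_pos (m : ℕ) {x : ℝ} (hx : 0 ≤ x) : 0 < Sf (m + 1) x := by
  refine Finset.sum_pos' (fun n _ => by positivity) ⟨0, Finset.mem_range.2 (by omega), by simp⟩

lemma Tf_lt_exp (m : ℕ) {x : ℝ} (hx : 0 < x) : Tf (m + 1) x < Real.exp x := by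
  have := Sf_pos m hx.le
  rw [Tf_eq]; linarith

lemma gPois_eq (σ : ℕ) {x : ℝ} (hx : 0 < x) :
    gPois σ x = x - Real.log (Tf σ x) := by
  have hT := Tf_pos σ hx
  rw [gPois, poissonTail, ← Tf, Real.log_mul (Real.exp_ne_zero _) hT.ne', Real.log_exp]
  ring


lemma hasDerivAt_gPois (m : ℕ) {x : ℝ} (hx : 0 < x) :
    HasDerivAt (gPois (m + 1)) (-(x ^ m / (m.factorial : ℝ) / Tf (m + 1) x)) x := by
  have hT := Tf_pos (m + 1) hx
  have hlog := (hasDerivAt_Tf m x).log hT.ne'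
  have h := (hasDerivAt_id x).sub hlog
  have hev : gPois (m + 1) =ᶠ[nhds x] fun y : ℝ => y - Real.log (Tf (m + 1) y) := by
    filter_upwards [Ioi_mem_nhds hx] with y hy
    exact gPois_eq _ hy
  have h2 := h.congr_of_eventuallyEq hev
  refine h2.congr_deriv ?_
  field_simp
  ring

lemma key_mono (m : ℕ) {x y : ℝ} (hx : 0 < x) (hxy : x ≤ y) :
    y ^ m * Tf (m + 1) x ≤ x ^ m * Tf (m + 1) y := by
  have hy : 0 < y := lt_of_lt_of_le hx hxy
  rw [Tf, Tf, ← tsum_mul_left, ← tsum_mul_left]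
  refine Summable.tsum_le_tsum (fun i => ?_) ((summable_aux _ x).mul_left _)
    ((summable_aux _ y).mul_left _)
  rw [← mul_div_assoc, ← mul_div_assoc]
  have hc : (0 : ℝ) < ((m + 1 + i).factorial : ℝ) := by positivity
  have hkey : y ^ m * x ^ (m + 1 + i) ≤ x ^ m * y ^ (m + 1 + i) := by
    have h1 : x ^ (1 + i) ≤ y ^ (1 + i) := pow_le_pow_left₀ hx.le hxy _
    calc y ^ m * x ^ (m + 1 + i) = (x ^ m * y ^ m) * x ^ (1 + i) := by
          rw [show m + 1 + i = m + (1 + i) from by omega, pow_add]; ring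
      _ ≤ (x ^ m * y ^ m) * y ^ (1 + i) :=
          mul_le_mul_of_nonneg_left h1 (by positivity)
      _ = x ^ m * y ^ (m + 1 + i) := by
          rw [show m + 1 + i = m + (1 + i) from by omega, pow_add]; ring
  gcongr


/-- Lemma 5.1: for every `σ ≥ 1` the function
`g_σ(x) = −log(e^{−x} Σ_{i=σ}^∞ x^i/i!)` is positive, (strictly) decreasing and convex
on `(0, ∞)`. -/
theorem stmt16 (σ : ℕ) (hσ : 1 ≤ σ) :
    (∀ x : ℝ, 0 < x → 0 < gPois σ x) ∧
    StrictAntiOn (gPois σ) (Set.Ioi 0) ∧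
    ConvexOn ℝ (Set.Ioi 0) (gPois σ) := by
  obtain ⟨m, rfl⟩ : ∃ m, σ = m + 1 := ⟨σ - 1, by omega⟩
  have hcont : ContinuousOn (gPois (m + 1)) (Set.Ioi 0) := fun x hx =>
    ((hasDerivAt_gPois m hx).continuousAt).continuousWithinAt
  have hderiv : ∀ x ∈ Set.Ioi (0 : ℝ),
      deriv (gPois (m + 1)) x = -(x ^ m / (m.factorial : ℝ) / Tf (m + 1) x) :=
    fun x hx => (hasDerivAt_gPois m hx).deriv
  refine ⟨?_, ?_, ?_⟩
  · intro x hx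
    rw [gPois_eq _ hx]
    have hT := Tf_pos (m + 1) hx
    have hlt := Tf_lt_exp m hx
    have hlog : Real.log (Tf (m + 1) x) < x := (Real.log_lt_iff_lt_exp hT).2 hlt
    linarith
  · refine strictAntiOn_of_deriv_neg (convex_Ioi 0) hcont ?_
    intro x hx
    rw [interior_Ioi] at hx
    rw [hderiv x hx]
    have hT := Tf_pos (m + 1) hx
    have hx0 : (0 : ℝ) < x := hx
    have : (0 : ℝ) < x ^ m / (m.factorial : ℝ) / Tf (m + 1) x := by positivity
    linarith
  · refine MonotoneOn.convexOn_of_deriv (convex_Ioi 0) hcont ?_ ?_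
    · intro x hx
      rw [interior_Ioi] at hx
      exact (hasDerivAt_gPois m hx).differentiableAt.differentiableWithinAt
    · rw [interior_Ioi]
      intro x hx y hy hxy
      rw [hderiv x hx, hderiv y hy, neg_le_neg_iff]
      have hTx := Tf_pos (m + 1) hx
      have hTy := Tf_pos (m + 1) hy
      have hfac : (0 : ℝ) < (m.factorial : ℝ) := by positivity
      have hk := key_mono m hx hxy
      rw [div_le_div_iff₀ hTy hTx, div_mul_eq_mul_div, div_mul_eq_mul_div,
        div_le_div_iff₀ hfac hfac]
      nlinarith [hk, hfac]


end JigsawPerc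
end
end

section
/- Let T be a tree with N ≥ 2 vertices (hence N − 1 edges), and replace each edge by two oppositely oriented edges, giving 2(N − 1) oriented edges. Then: (i) there is an oriented closed walk that uses each of the 2(N − 1) oriented edges exactly once; and (ii) for any integer L with 1 ≤ L ≤ N − 1, there exist ⌈(N − 1)/(2L²)⌉ segments (stretches of consecutive oriented edges) of this closed walk such that (1) the set of undirected edges underlying each segment has cardinality exactly L, (2) the underlying undirected edge sets of any two distinct segments are disjoint, and (3) the vertex sets of any two distinct segments intersect in at most one vertex. -/
open scoped Classical
open Filter

noncomputable section

namespace JigsawPerc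

variable {V : Type*}

/-- The set of undirected edges underlying the segment of `m` consecutive oriented edges
of the closed walk `c`, starting at position `a`. -/
def segEdges {V : Type*} {E : ℕ} (c : ZMod E → V × V) (a : ZMod E) (m : ℕ) :
    Set (Sym2 V) :=
  {e | ∃ j < m, e = s((c (a + (j : ZMod E))).1, (c (a + (j : ZMod E))).2)}

/-- The set of vertices incident to the edges of the segment of `m` consecutive oriented
edges of the closed walk `c`, starting at position `a`. -/
def segVerts {V : Type*} {E : ℕ} (c : ZMod E → V × V) (a : ZMod E) (m : ℕ) : Set V :=
  {v | ∃ j < m, v = (c (a + (j : ZMod E))).1 ∨ v = (c (a + (j : ZMod E))).2}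




universe u

/-- A cyclic Euler tour of the doubled tree, as a list of oriented edges. -/
def IsTour {V : Type u} [Fintype V] (T : SimpleGraph V) (l : List (V × V)) : Prop :=
  l.length = 2 * (Fintype.card V - 1) ∧
  (∀ p ∈ l, T.Adj p.1 p.2) ∧
  (∀ (i : ℕ) (h : i < l.length),
    (l[i]'h).2 = (l[(i+1) % l.length]'(Nat.mod_lt _ (Nat.zero_lt_of_lt h))).1) ∧
  l.Nodup ∧
  (∀ u v : V, T.Adj u v → (u, v) ∈ l)

lemma exists_adj_of_connected {V : Type u} [Fintype V] {T : SimpleGraph V}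
    (hc : T.Connected) (hcard : 1 < Fintype.card V) (a : V) : ∃ b, T.Adj a b := by
  obtain ⟨b, hb⟩ := Fintype.exists_ne_of_one_lt_card hcard a
  obtain ⟨w⟩ := hc a b
  cases w with
  | nil => exact absurd rfl hb.symm
  | cons h p => exact ⟨_, h⟩

lemma exists_leaf {V : Type u} [Fintype V] {T : SimpleGraph V} (hT : T.IsTree)
    (hcard : 2 ≤ Fintype.card V) : ∃ w u : V, T.neighborFinset w = {u} := by
  by_contra hno
  push_neg at hno
  have hdeg : ∀ v : V, 2 ≤ T.degree v := by
    intro v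
    have h1 : 0 < T.degree v := by
      rw [T.degree_pos_iff_exists_adj]
      exact exists_adj_of_connected hT.isConnected hcard v
    by_cases h2 : T.degree v = 1
    · exfalso
      obtain ⟨u, hu⟩ := Finset.card_eq_one.mp h2
      exact hno v u hu
    · omega
  have hsum := T.sum_degrees_eq_twice_card_edges
  have hedge : T.edgeFinset.card + 1 = Fintype.card V := hT.card_edgeFinset
  have : ∑ v : V, T.degree v ≥ ∑ _v : V, 2 := Finset.sum_le_sum (fun v _ => hdeg v)
  simp only [Finset.sum_const, Finset.card_univ, smul_eq_mul] at this
  omega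

section Removal

variable {V : Type u} [Fintype V] {T : SimpleGraph V} {w u : V}

/-- Transfer a walk avoiding `w` to the subgraph on `{x // x ≠ w}`. -/
lemma walk_avoid (hnbr : T.neighborFinset w = {u}) :
    ∀ {a b : V} (p : T.Walk a b), w ∉ p.support → ∀ (ha : a ≠ w) (hb : b ≠ w),
      (T.comap (Subtype.val : {x : V // x ≠ w} → V)).Reachable ⟨a, ha⟩ ⟨b, hb⟩ := by
  intro a b p
  induction p with
  | nil => intro _ ha hb; rfl
  | @cons a x b h p ih =>
    intro hw ha hb
    simp only [SimpleGraph.Walk.support_cons, List.mem_cons] at hw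
    push_neg at hw
    have hx : x ≠ w := by
      intro hxw; exact hw.2 (hxw ▸ p.start_mem_support)
    exact (SimpleGraph.Adj.reachable (by exact h : (T.comap
      (Subtype.val : {x : V // x ≠ w} → V)).Adj ⟨a, ha⟩ ⟨x, hx⟩)).trans
      (ih hw.2 hx hb)

lemma reach_to_u (hnbr : T.neighborFinset w = {u}) (hu : u ≠ w) :
    ∀ (k : ℕ) (a : V) (ha : a ≠ w) (p : T.Walk a u), p.length ≤ k →
      (T.comap (Subtype.val : {x : V // x ≠ w} → V)).Reachable ⟨a, ha⟩ ⟨u, hu⟩ := by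
  intro k
  induction k with
  | zero =>
    intro a ha p hp
    have : p.length = 0 := Nat.le_zero.mp hp
    have hnil := SimpleGraph.Walk.eq_of_length_eq_zero this
    subst hnil
    rfl
  | succ k ih =>
    intro a ha p hp
    by_cases hw : w ∈ p.support
    · have hql : (p.takeUntil w hw).length ≤ p.length := p.length_takeUntil_le hw
      cases hrev : (p.takeUntil w hw).reverse with
      | nil => exact absurd rfl ha
      | cons hadj t =>
        rename_i x
        have hxu : x = u := by
          have hx : x ∈ T.neighborFinset w := by
            rw [SimpleGraph.mem_neighborFinset]; exact hadj
          rw [hnbr, Finset.mem_singleton] at hx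
          exact hx
        subst hxu
        have hlen : t.length + 1 = (p.takeUntil w hw).length := by
          have h3 := congrArg SimpleGraph.Walk.length hrev
          simp only [SimpleGraph.Walk.length_reverse, SimpleGraph.Walk.length_cons] at h3
          omega
        exact ih a ha t.reverse (by rw [SimpleGraph.Walk.length_reverse]; omega)
    · exact walk_avoid hnbr p hw ha hu

lemma tree_removal {V : Type u} [Fintype V] {T : SimpleGraph V} {w u : V}
    (hT : T.IsTree) (hnbr : T.neighborFinset w = {u}) (hu : u ≠ w) :
    (T.comap (Subtype.val : {x : V // x ≠ w} → V)).IsTree := by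
  constructor
  · -- connected
    haveI : Nonempty {x : V // x ≠ w} := ⟨⟨u, hu⟩⟩
    refine ⟨fun a b => ?_⟩
    have hru : ∀ (a : {x : V // x ≠ w}),
        (T.comap (Subtype.val : {x : V // x ≠ w} → V)).Reachable a ⟨u, hu⟩ := by
      intro a
      obtain ⟨p⟩ := hT.isConnected a.val u
      exact reach_to_u hnbr hu p.length a.val a.2 p le_rfl
    exact (hru a).trans (hru b).symm
  · -- acyclic
    intro v p hp
    have hinj : Function.Injective (Subtype.val : {x : V // x ≠ w} → V) := Subtype.val_injective
    have : (p.map ⟨Subtype.val, fun h => h⟩).IsCycle := hp.map hinj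
    exact hT.IsAcyclic _ this

end Removal


theorem tour_exists : ∀ (n : ℕ) (V : Type u) [Fintype V] (T : SimpleGraph V),
    T.IsTree → Fintype.card V = n → ∃ l : List (V × V), IsTour T l := by
  intro n
  induction n using Nat.strong_induction_on with
  | _ n IH =>
  intro V _ T hT hcard
  rcases Nat.lt_or_ge n 2 with hn | hn
  · -- n ≤ 1 : empty tour
    have hne : Nonempty V := hT.isConnected.nonempty
    have h1 : Fintype.card V = 1 := by
      have := Fintype.card_pos (α := V); omega
    refine ⟨[], by simp [h1], by simp, by simp, by simp, ?_⟩
    intro a b hab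
    have : a = b := Fintype.card_le_one_iff.mp (le_of_eq h1) a b
    exact absurd (this ▸ hab) (T.irrefl)
  · obtain ⟨w, u, hnbr⟩ := exists_leaf hT (hcard ▸ hn)
    have hadj : T.Adj w u := by
      rw [← SimpleGraph.mem_neighborFinset, hnbr]; simp
    have huw : u ≠ w := hadj.ne'
    have hnbr_only : ∀ x, T.Adj w x → x = u := by
      intro x hx
      have : x ∈ T.neighborFinset w := by rw [SimpleGraph.mem_neighborFinset]; exact hx
      rw [hnbr, Finset.mem_singleton] at this; exact this
    by_cases hn2 : n = 2
    · -- base case:  two vertices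
      subst hn2
      have huniv : ∀ x : V, x = u ∨ x = w := by
        have hsub : ({u, w} : Finset V) ⊆ Finset.univ := Finset.subset_univ _
        have hcard2 : ({u, w} : Finset V).card = 2 := by
          rw [Finset.card_insert_of_notMem (by simp [huw]), Finset.card_singleton]
        have : ({u, w} : Finset V) = Finset.univ := by
          apply Finset.eq_of_subset_of_card_le hsub
          rw [hcard2, Finset.card_univ, hcard]
        intro x
        have hx : x ∈ ({u, w} : Finset V) := this ▸ Finset.mem_univ x
        simpa using hx
      refine ⟨[(u, w), (w, u)], ?_, ?_, ?_, ?_, ?_⟩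
      · simp [hcard]
      · intro p hp
        simp only [List.mem_cons, List.mem_singleton] at hp
        rcases hp with rfl | hp
        · exact hadj.symm
        · simp only [List.not_mem_nil, or_false] at hp; subst hp; exact hadj
      · intro i h
        simp only [List.length_cons, List.length_nil] at h
        interval_cases i <;> simp
      · simp only [List.nodup_cons, List.mem_singleton, List.not_mem_nil,
          not_false_iff, and_true, List.nodup_nil]
        intro h
        exact huw (congrArg Prod.fst h)
      · intro a b hab
        rcases huniv a with rfl | rfl <;> rcases huniv b with rfl | rfl
        · exact absurd hab (T.irrefl)
        · simp
        · simp
        · exact absurd hab (T.irrefl)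
    · -- inductive step, n ≥ 3
      have hn3 : 3 ≤ n := by omega
      set V' := {x : V // x ≠ w} with hV'
      set T' := T.comap (Subtype.val : V' → V) with hT'def
      have hT' : T'.IsTree := tree_removal hT hnbr huw
      have hcV' : Fintype.card V' = n - 1 := by
        have h1 : Fintype.card {x : V // ¬ x = w} = Fintype.card V - Fintype.card {x : V // x = w} :=
          Fintype.card_subtype_compl _
        have h2 : Fintype.card {x : V // x = w} = 1 := Fintype.card_subtype_eq w
        have h3 : Fintype.card V' = Fintype.card {x : V // ¬ x = w} := rfl
        omega
      obtain ⟨l', hlen', hadj', hchain', hnodup', hcompl'⟩ :=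
        IH (n - 1) (by omega) V' T' hT' hcV'
      set f : V' × V' → V × V := fun p => (p.1.val, p.2.val) with hf
      have hfinj : Function.Injective f := by
        intro p q h
        have h1 := congrArg Prod.fst h
        have h2 := congrArg Prod.snd h
        simp only [hf] at h1 h2
        exact Prod.ext (Subtype.val_injective h1) (Subtype.val_injective h2)
      set l'' : List (V × V) := l'.map f with hl''
      have hlm : l''.length = l'.length := by simp [hl'']
      have hlen'' : l''.length = 2 * (n - 2) := by
        rw [hlm, hlen', hcV']; omega
      have hchain'' : ∀ (i : ℕ) (h : i < l''.length),
          (l''[i]'h).2 = (l''[(i+1) % l''.length]'(Nat.mod_lt _ (by omega))).1 := by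
        intro i h
        have h' : i < l'.length := by rw [← hlm]; exact h
        simp only [hl'', List.getElem_map, List.length_map]
        exact congrArg Subtype.val (hchain' i h')
      have hadj'' : ∀ p ∈ l'', T.Adj p.1 p.2 := by
        intro p hp
        rw [hl'', List.mem_map] at hp
        obtain ⟨q, hq, rfl⟩ := hp
        exact hadj' q hq
      have hnodup'' : l''.Nodup := hnodup'.map hfinj
      have hw'' : ∀ p ∈ l'', p.1 ≠ w ∧ p.2 ≠ w := by
        intro p hp
        rw [hl'', List.mem_map] at hp
        obtain ⟨q, hq, rfl⟩ := hp
        exact ⟨q.1.2, q.2.2⟩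
      -- find an occurrence of u as a first coordinate
      have hc2 : 1 < Fintype.card V' := by omega
      obtain ⟨x', hx'⟩ := exists_adj_of_connected hT'.isConnected hc2 ⟨u, huw⟩
      have hmem : ((⟨u, huw⟩ : V'), x') ∈ l' := hcompl' _ _ hx'
      obtain ⟨jf, hjf⟩ := List.mem_iff_get.mp hmem
      set j := jf.val with hjdef
      have hj : j < l''.length := by rw [hlm]; exact jf.isLt
      have hgetj : (l''[j]'hj).1 = u := by
        simp only [hl'', List.getElem_map]
        rw [show l'[j]'(by omega) = l'.get jf from rfl, hjf]
      set A := l''.take j with hA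
      set B := l''.drop j with hB
      have hAlen : A.length = j := by
        rw [hA, List.length_take]; omega
      have hBlen : B.length = l''.length - j := by
        rw [hB, List.length_drop]
      set L : List (V × V) := A ++ ((u, w) :: (w, u) :: B) with hL
      have hLlen : L.length = l''.length + 2 := by
        simp only [hL, List.length_append, List.length_cons, hAlen, hBlen]
        omega
      -- getElem characterizations
      have hgetlt : ∀ (i : ℕ) (hij : i < j), L[i]'(by omega) = l''[i]'(by omega) := by
        intro i hij
        simp only [hL]
        rw [List.getElem_append_left (by omega : i < A.length)]
        simp only [hA]
        rw [List.getElem_take]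
      have hgeteq : L[j]'(by omega) = (u, w) := by
        simp only [hL]
        rw [List.getElem_append_right (by omega : A.length ≤ j)]
        simp [hAlen]
      have hgeteq1 : L[j+1]'(by omega) = (w, u) := by
        simp only [hL]
        rw [List.getElem_append_right (by omega : A.length ≤ j + 1)]
        simp [hAlen]
      have hgetgt : ∀ (i : ℕ) (h2 : j + 2 ≤ i) (h : i < L.length),
          L[i]'h = l''[i-2]'(by omega) := by
        intro i h2 h
        simp only [hL]
        rw [List.getElem_append_right (by omega : A.length ≤ i)]
        have hidx : i - A.length = (i - j - 2) + 2 := by omega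
        simp only [hidx]
        rw [List.getElem_cons_succ, List.getElem_cons_succ]
        simp only [hB]
        rw [List.getElem_drop]
        congr 1
        omega
      refine ⟨L, ?_, ?_, ?_, ?_, ?_⟩
      · -- length
        rw [hLlen, hlen'', hcard]; omega
      · -- adjacency
        intro p hp
        rw [hL] at hp
        simp only [List.mem_append, List.mem_cons] at hp
        rcases hp with hp | rfl | rfl | hp
        · exact hadj'' p (List.mem_of_mem_take hp)
        · exact hadj.symm
        · exact hadj
        · exact hadj'' p (List.mem_of_mem_drop hp)
      · -- chain
        intro i h
        have hlpos : 0 < l''.length := by omega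
        simp only [hLlen] at h ⊢
        by_cases c1 : i + 1 < j
        · simp only [Nat.mod_eq_of_lt (show i + 1 < l''.length + 2 by omega)]
          simp only [hgetlt i (by omega), hgetlt (i+1) c1]
          have := hchain'' i (by omega)
          simpa only [Nat.mod_eq_of_lt (show i + 1 < l''.length by omega)] using this
        · by_cases c2 : i + 1 = j
          · simp only [Nat.mod_eq_of_lt (show i + 1 < l''.length + 2 by omega)]
            simp only [hgetlt i (by omega), c2, hgeteq]
            have := hchain'' i (by omega)
            simp only [c2, Nat.mod_eq_of_lt (show i + 1 < l''.length by omega),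
              Nat.mod_eq_of_lt (show j < l''.length by omega)] at this
            rw [this, hgetj]
          · by_cases c3 : i = j
            · simp only [c3, Nat.mod_eq_of_lt (show j + 1 < l''.length + 2 by omega),
                hgeteq, hgeteq1]
            · by_cases c4 : i = j + 1
              · simp only [c4, Nat.mod_eq_of_lt (show j + 1 + 1 < l''.length + 2 by omega),
                  hgeteq1, show j + 1 + 1 = j + 2 from rfl,
                  hgetgt (j+2) (by omega) (by simp only [hLlen]; omega)]
                simp only [show j + 2 - 2 = j from by omega]
                exact hgetj.symm
              · -- i ≥ j + 2
                have hige : j + 2 ≤ i := by omega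
                by_cases c5 : i + 1 < l''.length + 2
                · simp only [Nat.mod_eq_of_lt c5,
                    hgetgt i hige (by simp only [hLlen]; omega),
                    hgetgt (i+1) (by omega) (by simp only [hLlen]; omega)]
                  have := hchain'' (i-2) (by omega)
                  simp only [Nat.mod_eq_of_lt (show i - 2 + 1 < l''.length by omega)] at this
                  simpa only [show i - 2 + 1 = i + 1 - 2 from by omega] using this
                · -- wrap-around: i = l''.length + 1
                  have hieq : i = l''.length + 1 := by omega
                  have hmod : (i + 1) % (l''.length + 2) = 0 := by
                    rw [hieq]; simp
                  simp only [hmod, hgetgt i hige (by simp only [hLlen]; omega)]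
                  have hch := hchain'' (i-2) (by omega)
                  have hm2 : (i - 2 + 1) % l''.length = 0 := by
                    have h9 : i - 2 + 1 = l''.length := by omega
                    rw [h9, Nat.mod_self]
                  simp only [hm2] at hch
                  rw [hch]
                  by_cases cj : j = 0
                  · have h0 : L[0]'(by simp only [hLlen]; omega) = (u,w) := by
                      simp only [cj] at hgeteq; exact hgeteq
                    rw [h0]
                    have h1 : l''[0]'(by omega) = l''[j]'hj := by
                      simp only [cj]
                    rw [h1, hgetj]
                  · simp only [hgetlt 0 (by omega)]
              
      · -- nodup
        have hperm : L.Perm (((u,w) :: (w,u) :: []) ++ l'') := by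
          have h1 : L = A ++ (((u,w) :: (w,u) :: []) ++ B) := by
            simp [hL]
          have h2 : A ++ B = l'' := List.take_append_drop j l''
          rw [h1, ← h2]
          refine (List.perm_append_comm).trans ?_
          rw [List.append_assoc]
          exact List.Perm.append_left _ List.perm_append_comm
        apply hperm.nodup_iff.mpr
        simp only [List.cons_append, List.nil_append, List.nodup_cons]
        refine ⟨?_, ?_, hnodup''⟩
        · simp only [List.mem_cons]
          rintro (h | h)
          · exact huw (congrArg Prod.fst h)
          · exact (hw'' _ h).2 rfl
        · rintro h
          exact (hw'' _ h).1 rfl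
      · -- completeness
        intro a b hab
        have hmemL : ∀ p, p ∈ l'' → p ∈ L := by
          intro p hp
          rw [← List.take_append_drop j l''] at hp
          rw [hL]
          simp only [List.mem_append, List.mem_cons] at hp ⊢
          tauto
        by_cases haw : a = w
        · subst haw
          have : b = u := hnbr_only b hab
          subst this
          rw [hL]; simp
        · by_cases hbw : b = w
          · subst hbw
            have : a = u := hnbr_only a hab.symm
            subst this
            rw [hL]; simp
          · have : ((⟨a, haw⟩ : V'), (⟨b, hbw⟩ : V')) ∈ l' := hcompl' _ _ hab
            apply hmemL
            rw [hl'', List.mem_map]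
            exact ⟨_, this, rfl⟩


section PartB


variable {V : Type*} [Fintype V] {T : SimpleGraph V} {E : ℕ}

/-- The undirected edge at (natural-number) position `n` of the closed walk `c`. -/
def eN (c : ZMod E → V × V) (n : ℕ) : Sym2 V := s((c (n : ZMod E)).1, (c (n : ZMod E)).2)

/-- The edge set of the window of length `m` starting at position `s`. -/
def win (c : ZMod E → V × V) (s m : ℕ) : Finset (Sym2 V) :=
  (Finset.Ico s (s + m)).image (eN c)

lemma segEdges_eq_win (c : ZMod E → V × V) (s m : ℕ) :
    segEdges c ((s : ℕ) : ZMod E) m = ↑(win c s m) := by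
  ext e
  simp only [segEdges, Set.mem_setOf_eq, win, Finset.coe_image, Set.mem_image,
    Finset.mem_coe, Finset.mem_Ico, eN]
  constructor
  · rintro ⟨j, hj, rfl⟩
    refine ⟨s + j, ⟨Nat.le_add_right _ _, by omega⟩, ?_⟩
    push_cast
    rfl
  · rintro ⟨n, ⟨h1, h2⟩, rfl⟩
    refine ⟨n - s, by omega, ?_⟩
    have : ((s : ZMod E) + ((n - s : ℕ) : ZMod E)) = (n : ZMod E) := by
      rw [← Nat.cast_add]
      congr 1
      omega
    rw [this]

lemma occ_card (hE : 0 < E) (c : ZMod E → V × V)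
    (hadj : ∀ i, T.Adj (c i).1 (c i).2) (hinj : Function.Injective c)
    (hsurj : ∀ u v, T.Adj u v → ∃ i, c i = (u, v)) :
    ∀ e ∈ T.edgeSet, ((Finset.range E).filter (fun n => eN c n = e)).card = 2 := by
  haveI : NeZero E := ⟨hE.ne'⟩
  intro e he
  induction e with
  | _ u v =>
  rw [SimpleGraph.mem_edgeSet] at he
  obtain ⟨i1, hi1⟩ := hsurj u v he
  obtain ⟨i2, hi2⟩ := hsurj v u he.symm
  have hne12 : i1 ≠ i2 := by
    intro h
    rw [h, hi2] at hi1
    have h2 : v = u := congrArg Prod.fst hi1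
    exact he.ne h2.symm
  have hval : i1.val ≠ i2.val := fun h => hne12 (by
    have h1 := ZMod.natCast_rightInverse (n := E) i1
    have h2 := ZMod.natCast_rightInverse (n := E) i2
    rw [← h1, ← h2, h])
  have hset : (Finset.range E).filter (fun n => eN c n = s(u, v)) = {i1.val, i2.val} := by
    ext n
    simp only [Finset.mem_filter, Finset.mem_range, Finset.mem_insert, Finset.mem_singleton]
    constructor
    · rintro ⟨hn, hen⟩
      rw [eN, Sym2.eq_iff] at hen
      have : c (n : ZMod E) = (u, v) ∨ c (n : ZMod E) = (v, u) := by
        rcases hen with ⟨h1, h2⟩ | ⟨h1, h2⟩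
        · exact Or.inl (Prod.ext h1 h2)
        · exact Or.inr (Prod.ext h1 h2)
      rcases this with h | h
      · left
        have : (n : ZMod E) = i1 := hinj (by rw [h, hi1])
        rw [← this, ZMod.val_cast_of_lt hn]
      · right
        have : (n : ZMod E) = i2 := hinj (by rw [h, hi2])
        rw [← this, ZMod.val_cast_of_lt hn]
    · rintro (rfl | rfl)
      · refine ⟨ZMod.val_lt i1, ?_⟩
        rw [eN, ZMod.natCast_rightInverse i1, hi1]
      · refine ⟨ZMod.val_lt i2, ?_⟩
        rw [eN, ZMod.natCast_rightInverse i2, hi2, Sym2.eq_swap]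
  rw [hset, Finset.card_insert_of_notMem (by simpa using hval), Finset.card_singleton]

lemma win_zero (c : ZMod E → V × V) (s : ℕ) : (win c s 0).card = 0 := by
  simp [win]

lemma win_succ_le (c : ZMod E → V × V) (s m : ℕ) :
    (win c s (m + 1)).card ≤ (win c s m).card + 1 := by
  have h : Finset.Ico s (s + (m + 1)) = insert (s + m) (Finset.Ico s (s + m)) := by
    ext x
    simp only [Finset.mem_Ico, Finset.mem_insert]
    omega
  rw [win, h, Finset.image_insert]
  exact (Finset.card_insert_le _ _).trans (by rw [win])

lemma win_mem_edgeSet (c : ZMod E → V × V) (hadj : ∀ i, T.Adj (c i).1 (c i).2)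
    {s m : ℕ} {e : Sym2 V} (he : e ∈ win c s m) : e ∈ T.edgeSet := by
  rw [win, Finset.mem_image] at he
  obtain ⟨n, _, rfl⟩ := he
  exact hadj _

lemma le_two_mul_win (hE : 0 < E) (c : ZMod E → V × V)
    (hadj : ∀ i, T.Adj (c i).1 (c i).2)
    (hfib : ∀ e ∈ T.edgeSet, ((Finset.range E).filter (fun n => eN c n = e)).card = 2)
    (s m : ℕ) (hsm : s + m ≤ E) : m ≤ 2 * (win c s m).card := by
  have hsub : Finset.Ico s (s + m) ⊆ Finset.range E := by
    intro n hn
    rw [Finset.mem_Ico] at hn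
    rw [Finset.mem_range]
    omega
  have key : ∀ b ∈ (Finset.Ico s (s + m)).image (eN c),
      ((Finset.Ico s (s + m)).filter (fun n => eN c n = b)).card ≤ 2 := by
    intro b hb
    have hbe : b ∈ T.edgeSet := win_mem_edgeSet c hadj (by rwa [win])
    calc ((Finset.Ico s (s + m)).filter (fun n => eN c n = b)).card
        ≤ ((Finset.range E).filter (fun n => eN c n = b)).card :=
          Finset.card_le_card (Finset.filter_subset_filter _ hsub)
      _ = 2 := hfib b hbe
  have h2 := Finset.card_le_mul_card_image (f := eN c) (Finset.Ico s (s + m)) 2 key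
  rw [Nat.card_Ico, Nat.add_sub_cancel_left] at h2
  exact h2

lemma nat_ivt (f : ℕ → ℕ) (h0 : f 0 = 0) (hstep : ∀ m, f (m + 1) ≤ f m + 1) :
    ∀ (M L : ℕ), L ≤ f M → ∃ m ≤ M, f m = L := by
  intro M
  induction M with
  | zero => intro L hL; exact ⟨0, le_rfl, by omega⟩
  | succ M ih =>
    intro L hL
    by_cases h : L ≤ f M
    · obtain ⟨m, hm, hfm⟩ := ih L h
      exact ⟨m, by omega, hfm⟩
    · have := hstep M
      exact ⟨M + 1, le_rfl, by omega⟩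

lemma exists_window (hE : 0 < E) (c : ZMod E → V × V)
    (hadj : ∀ i, T.Adj (c i).1 (c i).2)
    (hfib : ∀ e ∈ T.edgeSet, ((Finset.range E).filter (fun n => eN c n = e)).card = 2)
    (L : ℕ) (hL : 1 ≤ L) (s : ℕ) (hs : s + (2 * L - 1) ≤ E) :
    ∃ m, 1 ≤ m ∧ m ≤ 2 * L - 1 ∧ (win c s m).card = L := by
  have hbig : L ≤ (win c s (2 * L - 1)).card := by
    have := le_two_mul_win hE c hadj hfib s (2 * L - 1) hs
    omega
  obtain ⟨m, hm, hfm⟩ := nat_ivt (fun m => (win c s m).card) (win_zero c s)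
    (win_succ_le c s) (2 * L - 1) L hbig
  refine ⟨m, ?_, hm, hfm⟩
  rcases Nat.eq_zero_or_pos m with rfl | h
  · rw [win_zero c s] at hfm; omega
  · exact h

/-- Positions at or after `pos` whose underlying edge already belongs to `U`. -/
def bad (c : ZMod E → V × V) (pos : ℕ) (U : Finset (Sym2 V)) : Finset ℕ :=
  (Finset.Ico pos E).filter (fun n => eN c n ∈ U)


lemma bad_card_split (c : ZMod E → V × V)
    (hadj : ∀ i, T.Adj (c i).1 (c i).2)
    (hfib : ∀ e ∈ T.edgeSet, ((Finset.range E).filter (fun n => eN c n = e)).card = 2)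
    (U : Finset (Sym2 V)) (L pos m : ℕ) (hm : 1 ≤ m) (hpm : pos + m ≤ E)
    (hcard : (win c pos m).card = L) :
    (bad c (pos + m) (U ∪ win c pos m)).card ≤ (bad c pos U).card + L := by
  set W := win c pos m with hW
  set Tout := (Finset.Ico (pos + m) E).filter (fun n => eN c n ∈ W) with hTout
  have hsub : bad c (pos + m) (U ∪ W) ⊆ bad c pos U ∪ Tout := by
    intro n hn
    simp only [bad, Finset.mem_filter, Finset.mem_Ico, Finset.mem_union] at hn ⊢
    rcases hn.2 with h | h
    · exact Or.inl ⟨⟨by omega, hn.1.2⟩, h⟩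
    · exact Or.inr (by
        simp only [hTout, Finset.mem_filter, Finset.mem_Ico]
        exact ⟨hn.1, h⟩)
  have hToutL : Tout.card ≤ L := by
    set TW := (Finset.range E).filter (fun n => eN c n ∈ W) with hTW
    have hTWcard : TW.card = 2 * L := by
      have hbi : TW = W.biUnion (fun e => (Finset.range E).filter (fun n => eN c n = e)) := by
        ext n
        simp only [hTW, Finset.mem_filter, Finset.mem_range, Finset.mem_biUnion]
        constructor
        · rintro ⟨h1, h2⟩; exact ⟨eN c n, h2, h1, rfl⟩
        · rintro ⟨e, he, h1, rfl⟩; exact ⟨h1, he⟩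
      rw [hbi, Finset.card_biUnion (fun x hx y hy hxy => ?_)]
      · rw [Finset.sum_congr rfl (fun e he => hfib e (win_mem_edgeSet c hadj (hW ▸ he)))]
        rw [Finset.sum_const, smul_eq_mul, hcard]
        ring
      · rw [Function.onFun, Finset.disjoint_left]
        intro a ha hb
        simp only [Finset.mem_filter] at ha hb
        exact hxy (by rw [← ha.2, ← hb.2])
    have hO : Finset.Ico pos (pos + m) ⊆ TW := by
      intro n hn
      simp only [hTW, Finset.mem_filter, Finset.mem_range]
      rw [Finset.mem_Ico] at hn
      refine ⟨by omega, ?_⟩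
      rw [hW, win]
      exact Finset.mem_image_of_mem _ (Finset.mem_Ico.mpr hn)
    have hToutTW : Tout ⊆ TW := by
      intro n hn
      simp only [hTout, Finset.mem_filter, Finset.mem_Ico] at hn
      simp only [hTW, Finset.mem_filter, Finset.mem_range]
      exact ⟨by omega, hn.2⟩
    have hdisj : Disjoint (Finset.Ico pos (pos + m)) Tout := by
      simp only [Finset.disjoint_left, Finset.mem_Ico]
      intro a ha hb
      simp only [hTout, Finset.mem_filter, Finset.mem_Ico] at hb
      omega
    have hunion : (Finset.Ico pos (pos + m)) ∪ Tout ⊆ TW := Finset.union_subset hO hToutTW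
    have h1 := Finset.card_le_card hunion
    rw [Finset.card_union_of_disjoint hdisj, Nat.card_Ico, Nat.add_sub_cancel_left] at h1
    have hLm : L ≤ m := by
      rw [← hcard, hW, win]
      exact (Finset.card_image_le).trans (by rw [Nat.card_Ico, Nat.add_sub_cancel_left])
    omega
  calc (bad c (pos + m) (U ∪ W)).card ≤ (bad c pos U ∪ Tout).card := Finset.card_le_card hsub
    _ ≤ (bad c pos U).card + Tout.card := Finset.card_union_le _ _
    _ ≤ (bad c pos U).card + L := by omega

lemma greedy (hE : 0 < E) (c : ZMod E → V × V)
    (hadj : ∀ i, T.Adj (c i).1 (c i).2)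
    (hfib : ∀ e ∈ T.edgeSet, ((Finset.range E).filter (fun n => eN c n = e)).card = 2)
    (L : ℕ) (hL : 1 ≤ L) :
    ∀ (fuel pos : ℕ) (U : Finset (Sym2 V)) (r : ℕ), 1 ≤ r → E - pos ≤ fuel →
    pos + (2 * L - 1) * ((bad c pos U).card + (r - 1) * (L + 1) + 1) ≤ E →
    ∃ ws : List (ℕ × ℕ), ws.length = r ∧
      (∀ p ∈ ws, pos ≤ p.1 ∧ p.1 + p.2 ≤ E ∧ 1 ≤ p.2 ∧ (win c p.1 p.2).card = L ∧
        Disjoint (win c p.1 p.2) U) ∧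
      ws.Pairwise (fun p q => Disjoint (win c p.1 p.2) (win c q.1 q.2)) := by
  intro fuel
  induction fuel with
  | zero =>
    intro pos U r hr hfuel hpot
    exfalso
    have h1 : 1 ≤ (2 * L - 1) * ((bad c pos U).card + (r - 1) * (L + 1) + 1) :=
      Nat.one_le_iff_ne_zero.mpr (by
        apply Nat.mul_ne_zero <;> omega)
    omega
  | succ fuel ih =>
    intro pos U r hr hfuel hpot
    have hy1 : 1 ≤ 2 * L - 1 := by omega
    have hposE : pos + (2 * L - 1) ≤ E := by
      have : 2 * L - 1 ≤ (2 * L - 1) * ((bad c pos U).card + (r - 1) * (L + 1) + 1) :=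
        Nat.le_mul_of_pos_right _ (by omega)
      omega
    by_cases hb : ∃ b ∈ bad c pos U, b < pos + (2 * L - 1)
    · -- clear a bad position
      obtain ⟨b, hbmem, hblt⟩ := hb
      have hbIco : pos ≤ b ∧ b < E := by
        have := hbmem
        simp only [bad, Finset.mem_filter, Finset.mem_Ico] at this
        exact this.1
      have hsub : bad c (b + 1) U ⊆ (bad c pos U).erase b := by
        intro n hn
        simp only [bad, Finset.mem_filter, Finset.mem_Ico] at hn
        rw [Finset.mem_erase]
        refine ⟨by omega, ?_⟩
        simp only [bad, Finset.mem_filter, Finset.mem_Ico]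
        exact ⟨⟨by omega, hn.1.2⟩, hn.2⟩
      have hcard' : (bad c (b + 1) U).card + 1 ≤ (bad c pos U).card := by
        have h1 := Finset.card_le_card hsub
        rw [Finset.card_erase_of_mem hbmem] at h1
        have h2 : 1 ≤ (bad c pos U).card := Finset.card_pos.mpr ⟨b, hbmem⟩
        omega
      have hpot' : (b + 1) + (2 * L - 1) * ((bad c (b + 1) U).card + (r - 1) * (L + 1) + 1) ≤ E := by
        have hmul : (2 * L - 1) * ((bad c (b + 1) U).card + (r - 1) * (L + 1) + 1) + (2 * L - 1)
            ≤ (2 * L - 1) * ((bad c pos U).card + (r - 1) * (L + 1) + 1) := by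
          rw [← Nat.mul_succ]
          apply Nat.mul_le_mul_left
          omega
        omega
      obtain ⟨ws, h1, h2, h3⟩ := ih (b + 1) U r hr (by omega) hpot'
      exact ⟨ws, h1, fun p hp => ⟨by have := (h2 p hp).1; omega, (h2 p hp).2⟩, h3⟩
    · -- clean window available at pos
      push_neg at hb
      obtain ⟨m, hm1, hm2, hmcard⟩ := exists_window hE c hadj hfib L hL pos hposE
      have hclean : Disjoint (win c pos m) U := by
        rw [Finset.disjoint_left]
        intro e he heU
        rw [win, Finset.mem_image] at he
        obtain ⟨n, hn, rfl⟩ := he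
        rw [Finset.mem_Ico] at hn
        have : n ∈ bad c pos U := by
          simp only [bad, Finset.mem_filter, Finset.mem_Ico]
          exact ⟨⟨hn.1, by omega⟩, heU⟩
        exact absurd (hb n this) (by push_neg; omega)
      rcases Nat.lt_or_ge r 2 with hr2 | hr2
      · -- r = 1
        have : r = 1 := by omega
        subst this
        refine ⟨[(pos, m)], rfl, ?_, ?_⟩
        · intro p hp
          simp only [List.mem_singleton] at hp
          subst hp
          exact ⟨le_rfl, by omega, hm1, hmcard, hclean⟩
        · simp
      · -- r ≥ 2 : recurse
        set pos' := pos + m with hpos'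
        set U' := U ∪ win c pos m with hU'
        have hbadbound : (bad c pos' U').card ≤ (bad c pos U).card + L := by
          rw [hpos', hU']
          exact bad_card_split c hadj hfib U L pos m hm1 (by omega) hmcard
        have hpot' : pos' + (2 * L - 1) * ((bad c pos' U').card + (r - 1 - 1) * (L + 1) + 1) ≤ E := by
          have hmul : (2 * L - 1) * ((bad c pos' U').card + (r - 1 - 1) * (L + 1) + 1) + (2 * L - 1)
              ≤ (2 * L - 1) * ((bad c pos U).card + (r - 1) * (L + 1) + 1) := by
            rw [← Nat.mul_succ]
            apply Nat.mul_le_mul_left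
            obtain ⟨r', hr'⟩ : ∃ r', r - 1 = r' + 1 := ⟨r - 2, by omega⟩
            rw [hr']
            simp only [Nat.add_sub_cancel]
            rw [Nat.add_mul, Nat.one_mul]
            omega
          omega
        obtain ⟨ws, h1, h2, h3⟩ := ih pos' U' (r - 1) (by omega) (by omega) hpot'
        refine ⟨(pos, m) :: ws, by simp [h1]; omega, ?_, ?_⟩
        · intro p hp
          rcases List.mem_cons.mp hp with rfl | hp
          · exact ⟨le_rfl, by omega, hm1, hmcard, hclean⟩
          · obtain ⟨ha, hb', hc, hd, hdis⟩ := h2 p hp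
            refine ⟨by omega, hb', hc, hd, ?_⟩
            exact Finset.disjoint_of_subset_right (Finset.subset_union_left) hdis
        · rw [List.pairwise_cons]
          refine ⟨?_, h3⟩
          intro q hq
          have hdis := (h2 q hq).2.2.2.2
          exact (Finset.disjoint_of_subset_right (Finset.subset_union_right) hdis).symm


lemma walk_to (c : ZMod E → V × V) (hadj : ∀ i, T.Adj (c i).1 (c i).2)
    (hchain : ∀ i, (c i).2 = (c (i + 1)).1) (a : ZMod E) :
    ∀ j : ℕ, ∃ w : T.Walk ((c a).1) ((c (a + (j : ZMod E))).1),
      ∀ e ∈ w.edges, ∃ i < j, e = s((c (a + (i : ZMod E))).1, (c (a + (i : ZMod E))).2) := by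
  intro j
  induction j with
  | zero =>
    refine ⟨SimpleGraph.Walk.nil.copy rfl (by norm_num), ?_⟩
    simp
  | succ j ih =>
    obtain ⟨w, hw⟩ := ih
    have hkey : (c (a + (j : ZMod E))).2 = (c (a + ((j + 1 : ℕ) : ZMod E))).1 := by
      rw [show ((j + 1 : ℕ) : ZMod E) = (j : ZMod E) + 1 by push_cast; ring, ← add_assoc]
      exact hchain _
    refine ⟨(w.concat (hadj (a + (j : ZMod E)))).copy rfl hkey, ?_⟩
    intro e he
    rw [SimpleGraph.Walk.edges_copy, SimpleGraph.Walk.edges_concat] at he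
    rw [List.concat_eq_append, List.mem_append, List.mem_singleton] at he
    rcases he with h | h
    · obtain ⟨i, hi, hei⟩ := hw e h
      exact ⟨i, by omega, hei⟩
    · exact ⟨j, by omega, h⟩

lemma vert_walk (c : ZMod E → V × V) (hadj : ∀ i, T.Adj (c i).1 (c i).2)
    (hchain : ∀ i, (c i).2 = (c (i + 1)).1) (a : ZMod E) (m : ℕ) {v : V}
    (hv : v ∈ segVerts c a m) :
    ∃ w : T.Walk ((c a).1) v, ∀ e ∈ w.edges, e ∈ segEdges c a m := by
  obtain ⟨j, hj, hvj⟩ := hv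
  rcases hvj with rfl | rfl
  · obtain ⟨w, hw⟩ := walk_to c hadj hchain a j
    exact ⟨w, fun e he => by
      obtain ⟨i, hi, hei⟩ := hw e he
      exact ⟨i, by omega, hei⟩⟩
  · obtain ⟨w, hw⟩ := walk_to c hadj hchain a (j + 1)
    have hkey : (c (a + ((j + 1 : ℕ) : ZMod E))).1 = (c (a + (j : ZMod E))).2 := by
      rw [show ((j + 1 : ℕ) : ZMod E) = (j : ZMod E) + 1 by push_cast; ring, ← add_assoc]
      exact (hchain _).symm
    refine ⟨w.copy rfl hkey, fun e he => ?_⟩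
    rw [SimpleGraph.Walk.edges_copy] at he
    obtain ⟨i, hi, hei⟩ := hw e he
    exact ⟨i, by omega, hei⟩

lemma seg_inter_subsingleton (hT : T.IsTree) (c : ZMod E → V × V)
    (hadj : ∀ i, T.Adj (c i).1 (c i).2)
    (hchain : ∀ i, (c i).2 = (c (i + 1)).1) (a a' : ZMod E) (m m' : ℕ)
    (hdis : Disjoint (segEdges c a m) (segEdges c a' m')) :
    (segVerts c a m ∩ segVerts c a' m').Subsingleton := by
  intro u hu v hv
  obtain ⟨w1u, h1u⟩ := vert_walk c hadj hchain a m hu.1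
  obtain ⟨w1v, h1v⟩ := vert_walk c hadj hchain a m hv.1
  obtain ⟨w2u, h2u⟩ := vert_walk c hadj hchain a' m' hu.2
  obtain ⟨w2v, h2v⟩ := vert_walk c hadj hchain a' m' hv.2
  classical
  set p1 := (w1u.reverse.append w1v).bypass with hp1
  set p2 := (w2u.reverse.append w2v).bypass with hp2
  have hp1e : ∀ e ∈ p1.edges, e ∈ segEdges c a m := by
    intro e he
    have h := SimpleGraph.Walk.edges_bypass_subset _ he
    rw [SimpleGraph.Walk.edges_append, SimpleGraph.Walk.edges_reverse] at h
    rcases List.mem_append.mp h with h | h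
    · exact h1u e (List.mem_reverse.mp h)
    · exact h1v e h
  have hp2e : ∀ e ∈ p2.edges, e ∈ segEdges c a' m' := by
    intro e he
    have h := SimpleGraph.Walk.edges_bypass_subset _ he
    rw [SimpleGraph.Walk.edges_append, SimpleGraph.Walk.edges_reverse] at h
    rcases List.mem_append.mp h with h | h
    · exact h2u e (List.mem_reverse.mp h)
    · exact h2v e h
  have heq : p1 = p2 := by
    have h := hT.IsAcyclic.path_unique
      (⟨p1, SimpleGraph.Walk.bypass_isPath _⟩ : T.Path u v)
      (⟨p2, SimpleGraph.Walk.bypass_isPath _⟩ : T.Path u v)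
    exact congrArg Subtype.val h
  have hlen0 : p1.length = 0 := by
    by_contra hne
    have hpos : 0 < p1.edges.length := by
      rw [SimpleGraph.Walk.length_edges]
      omega
    obtain ⟨e, he⟩ := List.exists_mem_of_length_pos hpos
    have he1 : e ∈ segEdges c a m := hp1e e he
    have he2 : e ∈ segEdges c a' m' := hp2e e (heq ▸ he)
    exact Set.disjoint_left.mp hdis he1 he2
  exact SimpleGraph.Walk.eq_of_length_eq_zero hlen0

lemma stmt17_arith (N L : ℕ) (hN : 2 ≤ N) (hL : 1 ≤ L) (hLN : L ≤ N - 1) :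
    (2 * L - 1) * (((N - 1 + 2 * L ^ 2 - 1) / (2 * L ^ 2) - 1) * (L + 1) + 1) ≤ 2 * (N - 1) := by
  have hq0 : 0 < 2 * L ^ 2 := by positivity
  set q := 2 * L ^ 2 with hq
  set K := (N - 1 + q - 1) / q with hKdef
  by_cases hK : K ≤ 1
  · have h0 : K - 1 = 0 := by omega
    rw [h0, Nat.zero_mul, Nat.zero_add, Nat.mul_one]
    omega
  · push_neg at hK
    have hK2 : 2 ≤ K := hK
    have hNq : 2 * q ≤ N - 1 + q - 1 := by
      have := (Nat.le_div_iff_mul_le hq0).mp hK2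
      omega
    have hA : (K - 1) * q ≤ N - 2 := by
      have h1 : N - 1 + q - 1 = (N - 2) + q := by omega
      have h2 : K = (N - 2) / q + 1 := by rw [hKdef, h1, Nat.add_div_right _ hq0]
      have h3 : K - 1 = (N - 2) / q := by omega
      rw [h3]
      exact Nat.div_mul_le_self _ _
    set A := K - 1 with hAdef
    have hA1 : 1 ≤ A := by omega
    have hNbound : A * q + 1 ≤ N - 1 := by omega
    have key : (2 * L - 1) * (A * (L + 1) + 1) ≤ 2 * (A * q + 1) := by
      obtain ⟨l, rfl⟩ : ∃ l, L = l + 1 := ⟨L - 1, by omega⟩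
      have h2l : 2 * (l + 1) - 1 = 2 * l + 1 := by omega
      rw [h2l, hq]
      ring_nf
      nlinarith [hA1, sq_nonneg l, Nat.zero_le l]
    omega

end PartB

/-- Lemma 6.1: a tree with `N ≥ 2` vertices has an oriented closed walk
using each of the `2(N−1)` oriented edges exactly once, and for any `1 ≤ L ≤ N − 1` there
are `⌈(N−1)/(2L²)⌉` segments of this walk whose undirected edge sets each have exactly `L`
elements and are pairwise disjoint, and whose vertex sets pairwise intersect in at most
one vertex. -/
theorem stmt17 {V : Type*} [Fintype V] (T : SimpleGraph V) (hT : T.IsTree)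
    (hN : 2 ≤ Fintype.card V) :
    ∃ c : ZMod (2 * (Fintype.card V - 1)) → V × V,
      (∀ i, T.Adj (c i).1 (c i).2) ∧
      (∀ i, (c i).2 = (c (i + 1)).1) ∧
      Function.Injective c ∧
      (∀ u v : V, T.Adj u v → ∃ i, c i = (u, v)) ∧
      (∀ L : ℕ, 1 ≤ L → L ≤ Fintype.card V - 1 →
        ∃ (a : Fin ((Fintype.card V - 1 + 2 * L ^ 2 - 1) / (2 * L ^ 2)) →
              ZMod (2 * (Fintype.card V - 1)))
          (m : Fin ((Fintype.card V - 1 + 2 * L ^ 2 - 1) / (2 * L ^ 2)) → ℕ),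
          (∀ k, (segEdges c (a k) (m k)).ncard = L) ∧
          (∀ k k', k ≠ k' →
            Disjoint (segEdges c (a k) (m k)) (segEdges c (a k') (m k'))) ∧
          (∀ k k', k ≠ k' →
            (segVerts c (a k) (m k) ∩ segVerts c (a k') (m k')).Subsingleton)) := by
  classical
  set N := Fintype.card V with hNdef
  obtain ⟨l, hlen, hladj, hlchain, hlnodup, hlcompl⟩ := tour_exists N V T hT rfl
  have hE : 0 < 2 * (N - 1) := by omega
  haveI : NeZero (2 * (N - 1)) := ⟨by omega⟩
  haveI : Fact (1 < 2 * (N - 1)) := ⟨by omega⟩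
  have hlenE : l.length = 2 * (N - 1) := hlen
  set c : ZMod (2 * (N - 1)) → V × V :=
    fun i => l[i.val]'(by rw [hlenE]; exact ZMod.val_lt i) with hc
  have hadj : ∀ i, T.Adj (c i).1 (c i).2 := fun i => hladj _ (List.getElem_mem _)
  have hchain : ∀ i, (c i).2 = (c (i + 1)).1 := by
    intro i
    have hvi : i.val < l.length := by rw [hlenE]; exact ZMod.val_lt i
    have h1 := hlchain i.val hvi
    have h2 : (i + 1).val = (i.val + 1) % (2 * (N - 1)) := by
      rw [ZMod.val_add, ZMod.val_one]
    simp only [hc]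
    simp only [h2, hlenE] at h1 ⊢
    exact h1
  have hinj : Function.Injective c := by
    intro i j hij
    have hgi := List.nodup_iff_injective_get.mp hlnodup
    have h3 : l.get ⟨i.val, by rw [hlenE]; exact ZMod.val_lt i⟩ =
        l.get ⟨j.val, by rw [hlenE]; exact ZMod.val_lt j⟩ := hij
    have h4 := congrArg Fin.val (hgi h3)
    exact ZMod.val_injective _ h4
  have hsurj : ∀ u v : V, T.Adj u v → ∃ i, c i = (u, v) := by
    intro u v huv
    obtain ⟨nf, hnf⟩ := List.mem_iff_get.mp (hlcompl u v huv)
    refine ⟨((nf.val : ℕ) : ZMod (2 * (N - 1))), ?_⟩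
    simp only [hc]
    simp only [ZMod.val_cast_of_lt (show (nf.val : ℕ) < 2 * (N - 1) by
      rw [← hlenE]; exact nf.isLt)]
    exact hnf
  refine ⟨c, hadj, hchain, hinj, hsurj, ?_⟩
  intro L hL1 hLN
  have hfib := occ_card (T := T) hE c hadj hinj hsurj
  set K := (N - 1 + 2 * L ^ 2 - 1) / (2 * L ^ 2) with hKdef
  have hq0 : 0 < 2 * L ^ 2 := by positivity
  have hK1 : 1 ≤ K := by
    rw [hKdef]
    rw [Nat.le_div_iff_mul_le hq0]
    omega
  have hbad0 : (bad c 0 (∅ : Finset (Sym2 V))).card = 0 := by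
    rw [Finset.card_eq_zero, bad]
    simp
  have hpot : 0 + (2 * L - 1) *
      ((bad c 0 (∅ : Finset (Sym2 V))).card + (K - 1) * (L + 1) + 1) ≤ 2 * (N - 1) := by
    rw [hbad0, Nat.zero_add, Nat.zero_add]
    exact stmt17_arith N L hN hL1 hLN
  obtain ⟨ws, hws1, hws2, hws3⟩ := greedy (T := T) hE c hadj hfib L hL1
    (2 * (N - 1)) 0 ∅ K hK1 (by omega) hpot
  have hwsk : ∀ k : Fin K, k.val < ws.length := fun k => by rw [hws1]; exact k.isLt
  refine ⟨fun k => (((ws[k.val]'(hwsk k)).1 : ℕ) : ZMod (2 * (N - 1))),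
          fun k => (ws[k.val]'(hwsk k)).2, ?_, ?_, ?_⟩
  · intro k
    have hmem := hws2 _ (List.getElem_mem (hwsk k))
    rw [segEdges_eq_win, Set.ncard_coe_finset]
    exact hmem.2.2.2.1
  · intro k k' hkk
    have hne : k.val ≠ k'.val := fun h => hkk (Fin.ext h)
    have hpair := List.pairwise_iff_get.mp hws3
    rw [segEdges_eq_win, segEdges_eq_win, Finset.disjoint_coe]
    rcases Nat.lt_or_ge k.val k'.val with h | h
    · exact hpair ⟨k.val, hwsk k⟩ ⟨k'.val, hwsk k'⟩ h
    · exact (hpair ⟨k'.val, hwsk k'⟩ ⟨k.val, hwsk k⟩ (Fin.mk_lt_mk.mpr (by omega))).symm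
  · intro k k' hkk
    apply seg_inter_subsingleton hT c hadj hchain
    have hne : k.val ≠ k'.val := fun h => hkk (Fin.ext h)
    have hpair := List.pairwise_iff_get.mp hws3
    rw [segEdges_eq_win, segEdges_eq_win, Finset.disjoint_coe]
    rcases Nat.lt_or_ge k.val k'.val with h | h
    · exact hpair ⟨k.val, hwsk k⟩ ⟨k'.val, hwsk k'⟩ h
    · exact (hpair ⟨k'.val, hwsk k'⟩ ⟨k.val, hwsk k⟩ (Fin.mk_lt_mk.mpr (by omega))).symm

end JigsawPerc
end
end

section
/- Fix an integer σ ≥ 1. Let G_ppl be an Erdős–Rényi random graph on a vertex set V of size N, with edge probability p ∈ (0, 1]. Call S ⊆ V unstoppable if every vertex of V \ S has at least σ G_ppl-neighbors in S. If S ⊆ V satisfies |S| ≥ α (log N)/p for some α > σ, then P_p(S is unstoppable) ≥ 1 − 3σ N^{1 − α/σ}. -/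
open scoped Classical
open Filter

noncomputable section

namespace JigsawPerc

variable {V : Type*}

/-- `S` is unstoppable for the people graph `G`: every vertex outside `S` has at least
`σ` `G`-neighbors in `S`. -/
def Unstoppable (G : SimpleGraph V) (σ : ℕ) (S : Set V) : Prop :=
  ∀ v ∉ S, σ ≤ nbrCount G v S

lemma sum_prod_bool_s18 {ι : Type*} [Fintype ι] (f : ι → Bool → ℝ) :
    ∑ g : ι → Bool, ∏ i, f i (g i) = ∏ i, ∑ b, f i b := by
  classical
  rw [Finset.prod_univ_sum, ← Fintype.piFinset_univ]

section lemmas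
variable [Fintype V] {p : ℝ}

lemma weight_nonneg (hp0 : 0 ≤ p) (hp1 : p ≤ 1) (ω : {e : Sym2 V // ¬ e.IsDiag} → Bool) :
    0 ≤ ∏ e, (if ω e then p else 1 - p) :=
  Finset.prod_nonneg fun e _ => by split <;> linarith

lemma erProb_nonneg (hp0 : 0 ≤ p) (hp1 : p ≤ 1) (A : SimpleGraph V → Prop) :
    0 ≤ erProb p A :=
  Finset.sum_nonneg fun ω _ => by
    split
    · exact weight_nonneg hp0 hp1 ω
    · exact le_refl _

lemma sum_weight (p : ℝ) :
    ∑ ω : {e : Sym2 V // ¬ e.IsDiag} → Bool, ∏ e, (if ω e then p else 1 - p) = 1 := by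
  classical
  rw [← Fintype.piFinset_univ,
    ← Finset.prod_univ_sum (f := fun (_ : {e : Sym2 V // ¬ e.IsDiag}) (b : Bool) => if b then p else 1 - p)]
  exact Finset.prod_eq_one fun e _ => by simp

lemma erProb_add_compl (p : ℝ) (A : SimpleGraph V → Prop) :
    erProb p A + erProb p (fun G => ¬ A G) = 1 := by
  classical
  rw [erProb, erProb, ← Finset.sum_add_distrib]
  refine (Finset.sum_congr rfl ?_).trans (sum_weight p)
  intro ω _
  by_cases h : A (graphOf ω) <;> simp [h]

lemma erProb_mono (hp0 : 0 ≤ p) (hp1 : p ≤ 1) {A B : SimpleGraph V → Prop}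
    (h : ∀ G, A G → B G) : erProb p A ≤ erProb p B := by
  apply Finset.sum_le_sum
  intro ω _
  by_cases hA : A (graphOf ω)
  · simp [hA, h _ hA]
  · simp only [hA, if_false]
    split
    · exact weight_nonneg hp0 hp1 ω
    · exact le_refl _

lemma erProb_union_le {ι : Type*} (hp0 : 0 ≤ p) (hp1 : p ≤ 1) (s : Finset ι)
    (A : ι → SimpleGraph V → Prop) :
    erProb p (fun G => ∃ i ∈ s, A i G) ≤ ∑ i ∈ s, erProb p (A i) := by
  classical
  calc erProb p (fun G => ∃ i ∈ s, A i G)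
      ≤ ∑ ω : {e : Sym2 V // ¬ e.IsDiag} → Bool, ∑ i ∈ s,
          (if A i (graphOf ω) then ∏ e, (if ω e then p else 1 - p) else 0) := by
        apply Finset.sum_le_sum
        intro ω _
        by_cases h : ∃ i ∈ s, A i (graphOf ω)
        · rw [if_pos h]
          obtain ⟨i, hi, hAi⟩ := h
          have hle := Finset.single_le_sum
            (f := fun j => if A j (graphOf ω) then ∏ e, (if ω e then p else 1 - p) else 0)
            (fun j _ => by
              split
              · exact weight_nonneg hp0 hp1 ω
              · exact le_refl _) hi
          rw [if_pos hAi] at hle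
          exact hle
        · rw [if_neg h]
          apply Finset.sum_nonneg
          intro j _
          split
          · exact weight_nonneg hp0 hp1 ω
          · exact le_refl _
    _ = ∑ i ∈ s, erProb p (A i) := Finset.sum_comm

lemma sum_weight_false_on (p : ℝ) (E₀ : Finset {e : Sym2 V // ¬ e.IsDiag}) :
    ∑ ω : {e : Sym2 V // ¬ e.IsDiag} → Bool,
      (if (∀ e ∈ E₀, ω e = false) then ∏ e, (if ω e then p else 1 - p) else 0)
      = (1 - p) ^ E₀.card := by
  classical
  have step1 : ∀ ω : {e : Sym2 V // ¬ e.IsDiag} → Bool,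
      (if (∀ e ∈ E₀, ω e = false) then ∏ e, (if ω e then p else 1 - p) else 0)
      = ∏ e, (fun (e : {e : Sym2 V // ¬ e.IsDiag}) (b : Bool) =>
          if e ∈ E₀ then (if b then 0 else 1 - p) else (if b then p else 1 - p)) e (ω e) := by
    intro ω
    by_cases h : ∀ e ∈ E₀, ω e = false
    · rw [if_pos h]
      apply Finset.prod_congr rfl
      intro e _
      by_cases he : e ∈ E₀
      · simp [he, h e he]
      · simp [he]
    · rw [if_neg h]
      push_neg at h
      obtain ⟨e, he, hωe⟩ := h
      rw [eq_comm]
      apply Finset.prod_eq_zero (Finset.mem_univ e)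
      simp only [he, if_true, Bool.not_eq_false] at hωe ⊢
      simp [hωe]
  rw [Finset.sum_congr rfl fun ω _ => step1 ω]
  rw [← Fintype.piFinset_univ,
    ← Finset.prod_univ_sum (f := fun (e : {e : Sym2 V // ¬ e.IsDiag}) (b : Bool) =>
      if e ∈ E₀ then (if b then 0 else 1 - p) else (if b then p else 1 - p))]
  have step3 : ∀ e : {e : Sym2 V // ¬ e.IsDiag},
      (∑ b : Bool, if e ∈ E₀ then (if b then 0 else 1 - p) else (if b then p else 1 - p))
      = if e ∈ E₀ then (1 - p) else 1 := by
    intro e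
    by_cases he : e ∈ E₀ <;> simp [he]
  rw [Finset.prod_congr rfl fun e _ => step3 e, Finset.prod_ite_mem, Finset.univ_inter,
    Finset.prod_const]

lemma erProb_no_nbr (p : ℝ) (v : V) (T : Finset V) (hv : v ∉ T) :
    erProb p (fun G => ∀ u ∈ T, ¬ G.Adj v u) = (1 - p) ^ T.card := by
  classical
  set E₀ : Finset {e : Sym2 V // ¬ e.IsDiag} :=
    T.attach.image (fun u => ⟨s(v, u.1), by
      simp only [Sym2.isDiag_iff_proj_eq]
      exact fun h => hv (h ▸ u.2)⟩) with hE₀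
  have hcard : E₀.card = T.card := by
    rw [hE₀, Finset.card_image_of_injOn, Finset.card_attach]
    intro u₁ _ u₂ _ h
    have h' : s(v, (u₁ : V)) = s(v, (u₂ : V)) := congrArg Subtype.val h
    exact Subtype.ext (Sym2.congr_right.mp h')
  have hiff : ∀ ω : {e : Sym2 V // ¬ e.IsDiag} → Bool,
      ((∀ u ∈ T, ¬ (graphOf ω).Adj v u) ↔ (∀ e ∈ E₀, ω e = false)) := by
    intro ω
    have hadj : ∀ u ∈ T, ((graphOf ω).Adj v u ↔
        ∃ h : ¬ (s(v, u) : Sym2 V).IsDiag, ω ⟨s(v, u), h⟩ = true) := by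
      intro u hu
      have hne : v ≠ u := fun h => hv (h ▸ hu)
      rw [graphOf, SimpleGraph.fromEdgeSet_adj]
      simp only [Set.mem_setOf_eq, and_iff_left hne]
    constructor
    · intro h e he
      rw [hE₀] at he
      simp only [Finset.mem_image, Finset.mem_attach, true_and] at he
      obtain ⟨u, he⟩ := he
      have := h u.1 u.2
      rw [hadj u.1 u.2] at this
      push_neg at this
      rw [← he]
      exact Bool.not_eq_true _ ▸ (this _)
    · intro h u hu
      rw [hadj u hu]
      rintro ⟨hd, hω⟩
      have hmem : (⟨s(v, u), hd⟩ : {e : Sym2 V // ¬ e.IsDiag}) ∈ E₀ := by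
        rw [hE₀]
        exact Finset.mem_image.mpr ⟨⟨u, hu⟩, Finset.mem_attach _ _, rfl⟩
      rw [h _ hmem] at hω
      exact Bool.false_ne_true hω
  rw [erProb, ← hcard, ← sum_weight_false_on p E₀]
  exact Finset.sum_congr rfl fun ω _ => by simp only [hiff ω]

end lemmas

lemma exists_disjoint_pieces {W : Type*} [DecidableEq W] (n k : ℕ) :
    ∀ s : Finset W, n * k ≤ s.card →
    ∃ T : Fin n → Finset W, (∀ j, T j ⊆ s) ∧ (∀ j, (T j).card = k) ∧
      ∀ i j, i ≠ j → Disjoint (T i) (T j) := by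
  induction n with
  | zero => exact fun s _ => ⟨fun _ => ∅, fun j => j.elim0, fun j => j.elim0, fun i => i.elim0⟩
  | succ n ih =>
    intro s hs
    have hk : k ≤ s.card := le_trans (by nlinarith) hs
    obtain ⟨T₀, hT₀s, hT₀c⟩ := Finset.exists_subset_card_eq hk
    have hcard' : n * k ≤ (s \ T₀).card := by
      rw [Finset.card_sdiff_of_subset hT₀s, hT₀c]
      rw [Nat.succ_mul] at hs
      omega
    obtain ⟨T', hT's, hT'c, hT'd⟩ := ih (s \ T₀) hcard'
    refine ⟨Fin.cons T₀ T', ?_, ?_, ?_⟩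
    · intro j
      refine Fin.cases ?_ ?_ j
      · exact hT₀s
      · exact fun i => (hT's i).trans (Finset.sdiff_subset)
    · intro j
      refine Fin.cases ?_ ?_ j
      · exact hT₀c
      · exact fun i => hT'c i
    · have hd0 : ∀ i, Disjoint T₀ (T' i) := by
        intro i
        rw [Finset.disjoint_left]
        intro a ha ha'
        exact (Finset.mem_sdiff.mp (hT's i ha')).2 ha
      intro i j hij
      rcases Fin.eq_zero_or_eq_succ i with rfl | ⟨i', rfl⟩ <;>
        rcases Fin.eq_zero_or_eq_succ j with rfl | ⟨j', rfl⟩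
      · exact absurd rfl hij
      · simpa using hd0 j'
      · simpa using (hd0 i').symm
      · simpa using hT'd i' j' (fun h => hij (congrArg Fin.succ h))

lemma le_nbrCount [Fintype V] {G : SimpleGraph V} {v : V} {S : Set V} {σ : ℕ}
    (T : Fin σ → Finset V) (hsub : ∀ j, (T j : Set V) ⊆ S)
    (hdisj : ∀ i j, i ≠ j → Disjoint (T i) (T j))
    (hnbr : ∀ j, ∃ u ∈ T j, G.Adj v u) : σ ≤ nbrCount G v S := by
  classical
  choose u hu hadj using hnbr
  have huinj : Function.Injective u := by
    intro i j hij
    by_contra hne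
    exact (Finset.disjoint_left.mp (hdisj i j hne)) (hu i) (hij ▸ hu j)
  have hsubset : ((Finset.univ.image u : Finset V) : Set V) ⊆ {x ∈ S | G.Adj v x} := by
    intro x hx
    simp only [Finset.coe_image, Set.mem_image] at hx
    obtain ⟨j, _, rfl⟩ := hx
    exact ⟨hsub j (hu j), hadj j⟩
  calc σ = (Finset.univ.image u).card := by
        rw [Finset.card_image_of_injective _ huinj, Finset.card_univ, Fintype.card_fin]
    _ = ((Finset.univ.image u : Finset V) : Set V).ncard := (Set.ncard_coe_finset _).symm
    _ ≤ nbrCount G v S := Set.ncard_le_ncard hsubset (Set.toFinite _)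

/-- Lemma 2.6: in an Erdős–Rényi graph with edge probability `p` on
`N` vertices, a set `S` of size at least `α log N / p` with `α > σ` is unstoppable with
probability at least `1 − 3σ N^{1−α/σ}`. -/
theorem stmt18 {V : Type*} [Fintype V] (σ : ℕ) (hσ : 1 ≤ σ) (p α : ℝ)
    (hp0 : 0 < p) (hp1 : p ≤ 1) (hα : (σ : ℝ) < α) (S : Set V)
    (hS : α * Real.log (Fintype.card V) / p ≤ (S.ncard : ℝ)) :
    1 - 3 * σ * (Fintype.card V : ℝ) ^ ((1 : ℝ) - α / σ) ≤
      erProb p (fun G => Unstoppable G σ S) := by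
  classical
  set N := Fintype.card V with hN
  set m := S.ncard with hm
  set k := m / σ with hk
  set Sfin := S.toFinset with hSfin
  have hmS : m = Sfin.card := Set.ncard_eq_toFinset_card' S
  have hσk : σ * k ≤ Sfin.card := by
    rw [← hmS, hk, mul_comm]
    exact Nat.div_mul_le_self m σ
  obtain ⟨T, hTsub, hTcard, hTdisj⟩ := exists_disjoint_pieces σ k Sfin hσk
  set A : V × Fin σ → SimpleGraph V → Prop :=
    fun i G => ∀ u ∈ T i.2, ¬ G.Adj i.1 u with hA
  set idx : Finset (V × Fin σ) := (Finset.univ \ Sfin) ×ˢ Finset.univ with hidx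
  -- step A : bad event is covered
  have hcover : ∀ G : SimpleGraph V, ¬ Unstoppable G σ S → ∃ i ∈ idx, A i G := by
    intro G hbad
    rw [Unstoppable] at hbad
    push_neg at hbad
    obtain ⟨v, hvS, hvcnt⟩ := hbad
    by_contra hno
    push_neg at hno
    have hTn : ∀ j : Fin σ, ∃ u ∈ T j, G.Adj v u := by
      intro j
      have hvidx : (v, j) ∈ idx := by
        rw [hidx, Finset.mem_product]
        refine ⟨Finset.mem_sdiff.mpr ⟨Finset.mem_univ v, ?_⟩, Finset.mem_univ j⟩
        rw [hSfin, Set.mem_toFinset]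
        exact hvS
      have h' := hno (v, j) hvidx
      simp only [hA] at h'
      push_neg at h'
      exact h'
    have hsub' : ∀ j, (T j : Set V) ⊆ S := by
      intro j x hx
      have h2 : x ∈ S.toFinset := hTsub j (Finset.mem_coe.mp hx)
      exact Set.mem_toFinset.mp h2
    exact absurd (le_nbrCount T hsub' hTdisj hTn) (not_le.mpr hvcnt)
  -- step B : union bound
  have hbound : erProb p (fun G => ¬ Unstoppable G σ S)
      ≤ (N : ℝ) * σ * (1 - p) ^ k := by
    have h1 : erProb p (fun G => ¬ Unstoppable G σ S)
        ≤ erProb p (fun G => ∃ i ∈ idx, A i G) :=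
      erProb_mono hp0.le hp1 hcover
    have h2 : erProb p (fun G => ∃ i ∈ idx, A i G) ≤ ∑ i ∈ idx, erProb p (A i) :=
      erProb_union_le hp0.le hp1 idx A
    have h3 : ∑ i ∈ idx, erProb p (A i) = (idx.card : ℝ) * (1 - p) ^ k := by
      have hterm : ∀ i ∈ idx, erProb p (A i) = (1 - p) ^ k := by
        intro i hi
        have hv : i.1 ∉ T i.2 := by
          intro hmem
          have hv1 : i.1 ∈ Finset.univ \ Sfin := (Finset.mem_product.mp (hidx ▸ hi)).1
          exact (Finset.mem_sdiff.mp hv1).2 (hTsub i.2 hmem)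
        have heq := erProb_no_nbr (V := V) p i.1 (T i.2) hv
        rw [hTcard] at heq
        exact heq
      rw [Finset.sum_congr rfl hterm, Finset.sum_const, nsmul_eq_mul]
    have h4 : (idx.card : ℝ) ≤ (N : ℝ) * σ := by
      rw [hidx, Finset.card_product, Finset.card_univ, Fintype.card_fin]
      push_cast
      have : (Finset.univ \ Sfin).card ≤ N := le_trans (Finset.card_le_card (Finset.sdiff_subset)) (le_of_eq (Finset.card_univ))
      exact mul_le_mul_of_nonneg_right (by exact_mod_cast this) (by positivity)
    have hpow : (0:ℝ) ≤ (1 - p) ^ k := pow_nonneg (by linarith) k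
    calc erProb p (fun G => ¬ Unstoppable G σ S) ≤ (idx.card : ℝ) * (1 - p) ^ k :=
          h1.trans (h2.trans_eq h3)
      _ ≤ (N : ℝ) * σ * (1 - p) ^ k := mul_le_mul_of_nonneg_right h4 hpow
  -- complement
  have hcompl : erProb p (fun G => Unstoppable G σ S)
      = 1 - erProb p (fun G => ¬ Unstoppable G σ S) := by
    have := erProb_add_compl p (fun G => Unstoppable G σ S)
    linarith
  rw [hcompl]
  -- step D : arithmetic
  have hσR : (0:ℝ) < σ := by exact_mod_cast hσ
  rcases Nat.eq_zero_or_pos N with hN0 | hNpos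
  · have hrpow : (N : ℝ) ^ ((1:ℝ) - α / σ) = 0 := by
      rw [hN0]
      push_cast
      refine Real.zero_rpow ?_
      have : (1:ℝ) < α / σ := (one_lt_div hσR).mpr hα
      linarith
    have hidx0 : idx = ∅ := by
      rw [hidx]
      have : (Finset.univ : Finset V) = ∅ := Finset.card_eq_zero.mp (by rw [Finset.card_univ]; exact hN0)
      simp [this, Finset.sdiff_empty]
    have : erProb p (fun G => ¬ Unstoppable G σ S) ≤ 0 := by
      have := hbound
      rw [hN0] at this
      simpa using this
    rw [hrpow]
    linarith
  · -- N ≥ 1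
    have hN1 : (1:ℝ) ≤ N := by exact_mod_cast hNpos
    have hNR : (0:ℝ) < N := by linarith
    have hlogN : 0 ≤ Real.log N := Real.log_nonneg hN1
    have hpm : α * Real.log N ≤ p * m := by
      rw [div_le_iff₀ hp0] at hS
      calc α * Real.log N ≤ (m:ℝ) * p := hS
        _ = p * m := mul_comm _ _
    have hmk : (m:ℝ) < σ * (k + 1) := by
      have h1 : σ * k + m % σ = m := by rw [hk]; exact Nat.div_add_mod m σ
      have h2 : m % σ < σ := Nat.mod_lt _ (by omega)
      have : m < σ * (k + 1) := by rw [Nat.mul_succ]; omega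
      exact_mod_cast this
    have hkey : α / σ * Real.log N - p ≤ p * k := by
      have h5 : p * m / σ - p ≤ p * k := by
        rw [div_sub' (ne_of_gt hσR), div_le_iff₀ hσR]
        nlinarith
      have h6 : α / σ * Real.log N ≤ p * m / σ := by
        rw [div_mul_eq_mul_div, div_le_div_iff₀ hσR hσR]
        nlinarith
      linarith
    have h7 : (1 - p) ^ k ≤ Real.exp (-(p * k)) := by
      have h8 : 1 - p ≤ Real.exp (-p) := by
        have := Real.add_one_le_exp (-p)
        linarith
      calc (1 - p) ^ k ≤ (Real.exp (-p)) ^ k := pow_le_pow_left₀ (by linarith) h8 k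
        _ = Real.exp (-(p * k)) := by
          rw [← Real.exp_nat_mul]
          ring_nf
    have h9 : Real.exp (-(p * k)) ≤ 3 * (N:ℝ) ^ (-(α / σ)) := by
      have h10 : Real.exp (-(p * k)) ≤ Real.exp p * Real.exp (-(α / σ * Real.log N)) := by
        rw [← Real.exp_add]
        apply Real.exp_le_exp.mpr
        linarith
      have h11 : Real.exp (-(α / σ * Real.log N)) = (N:ℝ) ^ (-(α / σ)) := by
        rw [Real.rpow_def_of_pos hNR]
        ring_nf
      have h12 : Real.exp p ≤ 3 := by
        calc Real.exp p ≤ Real.exp 1 := Real.exp_le_exp.mpr hp1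
          _ ≤ 3 := by
            have := Real.exp_one_lt_d9
            linarith
      rw [h11] at h10
      have hrpos : (0:ℝ) ≤ (N:ℝ) ^ (-(α / σ)) := Real.rpow_nonneg hNR.le _
      calc Real.exp (-(p * k)) ≤ Real.exp p * (N:ℝ) ^ (-(α / σ)) := h10
        _ ≤ 3 * (N:ℝ) ^ (-(α / σ)) := mul_le_mul_of_nonneg_right h12 hrpos
    have h13 : (N:ℝ) * σ * (1 - p) ^ k ≤ 3 * σ * (N:ℝ) ^ ((1:ℝ) - α / σ) := by
      have h14 : (N:ℝ) ^ ((1:ℝ) - α / σ) = (N:ℝ) * (N:ℝ) ^ (-(α / σ)) := by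
        rw [sub_eq_add_neg, Real.rpow_add hNR, Real.rpow_one]
      rw [h14]
      have hle : (1 - p) ^ k ≤ 3 * (N:ℝ) ^ (-(α / σ)) := h7.trans h9
      calc (N:ℝ) * σ * (1 - p) ^ k ≤ (N:ℝ) * σ * (3 * (N:ℝ) ^ (-(α / σ))) :=
            mul_le_mul_of_nonneg_left hle (by positivity)
        _ = 3 * σ * ((N:ℝ) * (N:ℝ) ^ (-(α / σ))) := by ring
    linarith


end JigsawPerc
end
end
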